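/- arXiv:1509.00299 — 6 statements merged into one kernel-verified Lean document; each statement's English description precedes it below -/
import Mathlib

section
/- Let a, b be reals with 1/2 < a < 1 and b > 1/2. Then as h → ∞, the series S(h) := Σ_{j=0}^∞ (j+1)^(−a) (j+h+1)^(−b) satisfies S(h) ~ c(a,b) · h^(1−(a+b)), i.e., S(h) / h^(1−(a+b)) → c(a,b), where c(a,b) = ∫₀^∞ x^(−a)(x+1)^(−b) dx. -/
open MeasureTheory Set Filter

section Aux

open Real

private lemma contOnAux (c d H : ℝ) (hH : 0 ≤ H) :
    ContinuousOn (fun x : ℝ => (x + 1) ^ (-c) * (x + H + 1) ^ (-d)) (Ioi 0) := by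
  apply ContinuousOn.mul
  · exact (continuousOn_id.add continuousOn_const).rpow_const
      (fun x hx => Or.inl (by simp only [mem_Ioi] at hx; intro h; simp only [Pi.add_apply, id] at h; linarith))
  · exact ((continuousOn_id.add continuousOn_const).add continuousOn_const).rpow_const
      (fun x hx => Or.inl (by simp only [mem_Ioi] at hx; intro h; simp only [Pi.add_apply, id] at h; linarith))

private lemma intfAux (a b : ℝ) (ha : 0 < a) (ha1 : a < 1) (hab : 1 < a + b) (hb : 0 < b) :
    IntegrableOn (fun x : ℝ => x ^ (-a) * (x + 1) ^ (-b)) (Ioi 0) := by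
  have contOn : ContinuousOn (fun x : ℝ => x ^ (-a) * (x + 1) ^ (-b)) (Ioi 0) := by
    apply ContinuousOn.mul
    · exact continuousOn_id.rpow_const (fun x hx => Or.inl (ne_of_gt hx))
    · exact (continuousOn_id.add continuousOn_const).rpow_const
        (fun x hx => Or.inl (by simp only [mem_Ioi] at hx; intro h; simp only [Pi.add_apply, id] at h; linarith))
  rw [← Ioc_union_Ioi_eq_Ioi (zero_le_one (α := ℝ))]
  refine IntegrableOn.union ?_ ?_
  · have h1 : IntegrableOn (fun x : ℝ => x ^ (-a)) (Ioc 0 1) := by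
      have := intervalIntegral.intervalIntegrable_rpow' (a := 0) (b := 1) (r := -a) (by linarith)
      rwa [intervalIntegrable_iff_integrableOn_Ioc_of_le zero_le_one] at this
    refine h1.mono' ((contOn.mono ?_).aestronglyMeasurable measurableSet_Ioc) ?_
    · exact Ioc_subset_Ioi_self
    rw [ae_restrict_iff' measurableSet_Ioc]
    filter_upwards with x hx
    have hx0 : 0 < x := hx.1
    have h2 : (x + 1) ^ (-b) ≤ 1 :=
      rpow_le_one_of_one_le_of_nonpos (by linarith) (by linarith)
    have h3 : 0 ≤ x ^ (-a) := rpow_nonneg hx0.le _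
    rw [Real.norm_eq_abs, abs_of_nonneg (mul_nonneg h3 (rpow_nonneg (by linarith) _))]
    calc x ^ (-a) * (x + 1) ^ (-b) ≤ x ^ (-a) * 1 := mul_le_mul_of_nonneg_left h2 h3
      _ = x ^ (-a) := mul_one _
  · have h1 : IntegrableOn (fun x : ℝ => x ^ (-(a + b))) (Ioi 1) :=
      integrableOn_Ioi_rpow_of_lt (by linarith) one_pos
    refine h1.mono' ((contOn.mono ?_).aestronglyMeasurable measurableSet_Ioi) ?_
    · exact fun x hx => show (0:ℝ) < x from lt_trans one_pos hx
    rw [ae_restrict_iff' measurableSet_Ioi]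
    filter_upwards with x hx
    have hx0 : (0:ℝ) < x := lt_trans one_pos hx
    have h2 : (x + 1) ^ (-b) ≤ x ^ (-b) :=
      rpow_le_rpow_of_nonpos hx0 (by linarith) (by linarith)
    rw [Real.norm_eq_abs,
      abs_of_nonneg (mul_nonneg (rpow_nonneg hx0.le _) (rpow_nonneg (by linarith) _))]
    calc x ^ (-a) * (x + 1) ^ (-b) ≤ x ^ (-a) * x ^ (-b) :=
          mul_le_mul_of_nonneg_left h2 (rpow_nonneg hx0.le _)
      _ = x ^ (-(a+b)) := by rw [← rpow_add hx0]; ring_nf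

private lemma sumIntBoundsAux (g : ℝ → ℝ) (hmono : AntitoneOn g (Ici 0))
    (hnonneg : ∀ x : ℝ, 0 ≤ x → 0 ≤ g x)
    (hint : IntegrableOn g (Ioi 0)) (hsum : Summable fun j : ℕ => g j) :
    (∫ x in Ioi 0, g x) ≤ (∑' j : ℕ, g j) ∧
      (∑' j : ℕ, g j) ≤ g 0 + ∫ x in Ioi 0, g x := by
  have key : ∀ n : ℕ, AntitoneOn g (Icc (0:ℝ) (0 + n)) := fun n =>
    hmono.mono (fun x hx => hx.1)
  constructor
  · have T := intervalIntegral_tendsto_integral_Ioi 0 hint tendsto_natCast_atTop_atTop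
    refine le_of_tendsto T (Eventually.of_forall fun n => ?_)
    have h1 := (key n).integral_le_sum
    simp only [zero_add] at h1
    exact h1.trans (Summable.sum_le_tsum _ (fun i _ => hnonneg _ (Nat.cast_nonneg i)) hsum)
  · refine Real.tsum_le_of_sum_range_le (fun i => hnonneg _ (Nat.cast_nonneg i)) (fun n => ?_)
    have hI0 : 0 ≤ ∫ x in Ioi 0, g x :=
      setIntegral_nonneg measurableSet_Ioi (fun x hx => hnonneg x (le_of_lt hx))
    match n with
    | 0 => simpa using add_nonneg (hnonneg 0 le_rfl) hI0
    | Nat.succ m =>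
      rw [Finset.sum_range_succ']
      have h1 := (key m).sum_le_integral
      simp only [zero_add] at h1
      push_cast at h1 ⊢
      have h2 : (∫ x in (0:ℝ)..(m:ℝ), g x) ≤ ∫ x in Ioi 0, g x := by
        rw [intervalIntegral.integral_of_le (Nat.cast_nonneg m)]
        refine setIntegral_mono_set hint ?_ (Ioc_subset_Ioi_self).eventuallyLE
        exact (ae_restrict_iff' measurableSet_Ioi).mpr
          (Eventually.of_forall fun x hx => hnonneg x hx.le)
      linarith

private lemma covAux (a b H : ℝ) (hH : 0 < H)
    (hf : IntegrableOn (fun x : ℝ => x ^ (-a) * (x + 1) ^ (-b)) (Ioi 0))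
    (hg : IntegrableOn (fun x : ℝ => (x + 1) ^ (-a) * (x + H + 1) ^ (-b)) (Ioi 0)) :
    ∫ x in Ioi (0:ℝ), (x + 1) ^ (-a) * (x + H + 1) ^ (-b)
      = H ^ (1 - (a + b)) * ∫ u in Ioi (1/H), u ^ (-a) * (u + 1) ^ (-b) := by
  set g : ℝ → ℝ := fun x => (x + 1) ^ (-a) * (x + H + 1) ^ (-b) with hgdef
  set φ : ℝ → ℝ := fun u => H * u - 1 with hφdef
  have hφ0 : φ (1/H) = 0 := by simp only [hφdef]; field_simp; norm_num
  have himage : ∀ u : ℝ, 1/H ≤ u → 0 ≤ φ u := by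
    intro u hu
    have : 1 ≤ H * u := by
      rw [← mul_one_div_cancel hH.ne']; exact mul_le_mul_of_nonneg_left hu hH.le
    simp [hφdef]; linarith
  have himage' : ∀ u : ℝ, 1/H < u → 0 < φ u := by
    intro u hu
    have : 1 < H * u := by
      rw [← mul_one_div_cancel hH.ne']; exact mul_lt_mul_of_pos_left hu hH
    simp [hφdef]; linarith
  have hpow : ∀ u : ℝ, 1/H ≤ u →
      g (φ u) * H = H ^ (1 - (a+b)) * (u ^ (-a) * (u + 1) ^ (-b)) := by
    intro u hu
    have hu0 : 0 < u := lt_of_lt_of_le (by positivity) hu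
    have e1 : φ u + 1 = H * u := by simp [hφdef]
    have e2 : φ u + H + 1 = H * (u + 1) := by simp [hφdef]; ring
    rw [hgdef]
    simp only []
    rw [e1, e2, Real.mul_rpow hH.le hu0.le, Real.mul_rpow hH.le (by linarith)]
    rw [show (1 - (a+b)) = 1 + (-a + -b) by ring, Real.rpow_add hH, Real.rpow_add hH,
      Real.rpow_one]
    ring
  have key := integral_comp_mul_deriv_Ioi (f := φ) (f' := fun _ => H) (g := g) (a := 1/H)
    (((continuous_const.mul continuous_id).sub continuous_const).continuousOn)
    ?_ ?_ ?_ ?_ ?_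
  · rw [hφ0] at key
    rw [← key]
    rw [show (∫ x in Ioi (1/H), (g ∘ φ) x * H)
        = ∫ x in Ioi (1/H), H ^ (1-(a+b)) * (x ^ (-a) * (x+1) ^ (-b)) from
      setIntegral_congr_fun measurableSet_Ioi (fun u hu => hpow u (le_of_lt hu))]
    rw [integral_const_mul]
  · have : Tendsto (fun u : ℝ => H * u) atTop atTop := Tendsto.const_mul_atTop hH tendsto_id
    simpa [hφdef, sub_eq_add_neg] using tendsto_atTop_add_const_right atTop (-1) this
  · intro x _
    have : HasDerivAt φ H x := by
      have h := ((hasDerivAt_id x).const_mul H).sub_const 1; rw [mul_one] at h; exact h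
    exact this.hasDerivWithinAt
  · refine (contOnAux a b H hH.le).mono ?_
    rintro _ ⟨u, hu, rfl⟩
    exact himage' u hu
  · refine ((integrableOn_Ici_iff_integrableOn_Ioi).mpr hg).mono_set ?_
    rintro _ ⟨u, hu, rfl⟩
    exact himage u hu
  · have hsub : Ici (1/H) ⊆ Ioi (0:ℝ) := fun x hx => lt_of_lt_of_le (by positivity : (0:ℝ) < 1/H) hx
    have base : IntegrableOn
        (fun u : ℝ => H ^ (1-(a+b)) * (u ^ (-a) * (u + 1) ^ (-b))) (Ici (1/H)) :=
      (hf.mono_set hsub).const_mul _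
    exact base.congr_fun (fun u hu => (hpow u hu).symm) measurableSet_Ici

private lemma tendstoIhAux (f : ℝ → ℝ) (hint : IntegrableOn f (Ioi 0)) :
    Tendsto (fun h : ℕ => ∫ u in Ioi (1/(h:ℝ)), f u) atTop
      (nhds (∫ u in Ioi (0:ℝ), f u)) := by
  rw [← tendsto_add_atTop_iff_nat 1]
  have hs : Monotone (fun n : ℕ => Ioi (1/((n:ℝ)+1))) := by
    intro n m hnm
    apply Ioi_subset_Ioi
    have h1 : ((n:ℝ)+1) ≤ (m:ℝ)+1 := by
      have : (n:ℝ) ≤ (m:ℝ) := Nat.cast_le.mpr hnm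
      linarith
    exact one_div_le_one_div_of_le (by positivity) h1
  have hU : (⋃ n : ℕ, Ioi (1/((n:ℝ)+1))) = Ioi (0:ℝ) := by
    ext x
    simp only [mem_iUnion, mem_Ioi]
    constructor
    · rintro ⟨n, hn⟩; exact lt_trans (by positivity) hn
    · intro hx; exact exists_nat_one_div_lt hx
  have T := tendsto_setIntegral_of_monotone (fun n => measurableSet_Ioi) hs (hU ▸ hint)
  rw [hU] at T
  refine T.congr fun n => ?_
  congr 1
  push_cast
  ring

end Aux

theorem stmt_1 (a b : ℝ) (ha : 1/2 < a) (ha1 : a < 1) (hb : 1/2 < b) :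
    Tendsto
      (fun h : ℕ =>
        (∑' j : ℕ, ((j : ℝ) + 1) ^ (-a) * ((j : ℝ) + (h : ℝ) + 1) ^ (-b)) /
          (h : ℝ) ^ (1 - (a + b)))
      atTop
      (nhds (∫ x in Ioi (0:ℝ), x ^ (-a) * (x + 1) ^ (-b))) := by
  have ha0 : (0:ℝ) < a := by linarith
  have hb0 : (0:ℝ) < b := by linarith
  have hab : (1:ℝ) < a + b := by linarith
  have hf := intfAux a b ha0 ha1 hab hb0
  -- squeeze between I_h and I_h + h^(a-1)
  have hlow : Tendsto (fun h : ℕ => ∫ u in Ioi (1/(h:ℝ)), u ^ (-a) * (u + 1) ^ (-b)) atTop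
      (nhds (∫ x in Ioi (0:ℝ), x ^ (-a) * (x + 1) ^ (-b))) := tendstoIhAux _ hf
  have hzero : Tendsto (fun h : ℕ => (h:ℝ) ^ (a - 1)) atTop (nhds 0) := by
    have h1 : Tendsto (fun x : ℝ => x ^ (-(1 - a))) atTop (nhds 0) :=
      tendsto_rpow_neg_atTop (by linarith)
    have := h1.comp tendsto_natCast_atTop_atTop (f := fun h : ℕ => (h:ℝ))
    refine this.congr fun n => ?_
    simp only [Function.comp]
    norm_num
  have hup : Tendsto
      (fun h : ℕ => (∫ u in Ioi (1/(h:ℝ)), u ^ (-a) * (u + 1) ^ (-b)) + (h:ℝ) ^ (a - 1)) atTop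
      (nhds (∫ x in Ioi (0:ℝ), x ^ (-a) * (x + 1) ^ (-b))) := by
    have := hlow.add hzero
    simpa using this
  have key : ∀ h : ℕ, 1 ≤ h →
      (∫ u in Ioi (1/(h:ℝ)), u ^ (-a) * (u + 1) ^ (-b)) ≤
        (∑' j : ℕ, ((j : ℝ) + 1) ^ (-a) * ((j : ℝ) + (h : ℝ) + 1) ^ (-b)) /
          (h : ℝ) ^ (1 - (a + b)) ∧
      (∑' j : ℕ, ((j : ℝ) + 1) ^ (-a) * ((j : ℝ) + (h : ℝ) + 1) ^ (-b)) /
          (h : ℝ) ^ (1 - (a + b)) ≤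
        (∫ u in Ioi (1/(h:ℝ)), u ^ (-a) * (u + 1) ^ (-b)) + (h:ℝ) ^ (a - 1) := by
    intro h hh
    have hH : (1:ℝ) ≤ (h:ℝ) := by exact_mod_cast hh
    have hH0 : (0:ℝ) < (h:ℝ) := lt_of_lt_of_le one_pos hH
    set H : ℝ := (h:ℝ) with hHdef
    set g : ℝ → ℝ := fun x => (x + 1) ^ (-a) * (x + H + 1) ^ (-b) with hgdef
    have gnonneg : ∀ x : ℝ, 0 ≤ x → 0 ≤ g x := fun x hx =>
      mul_nonneg (Real.rpow_nonneg (by linarith) _) (Real.rpow_nonneg (by linarith) _)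
    have ganti : AntitoneOn g (Ici 0) := by
      intro x hx y hy hxy
      simp only [hgdef]
      simp only [mem_Ici] at hx hy
      refine mul_le_mul ?_ ?_ (Real.rpow_nonneg (by linarith) _) (Real.rpow_nonneg (by linarith) _)
      · exact Real.rpow_le_rpow_of_nonpos (by linarith) (by linarith) (by linarith)
      · exact Real.rpow_le_rpow_of_nonpos (by linarith) (by linarith) (by linarith)
    have gle : ∀ x : ℝ, 0 < x → g x ≤ x ^ (-a) * (x + 1) ^ (-b) := by
      intro x hx
      simp only [hgdef]
      refine mul_le_mul ?_ ?_ (Real.rpow_nonneg (by linarith) _) (Real.rpow_nonneg (by linarith) _)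
      · exact Real.rpow_le_rpow_of_nonpos hx (by linarith) (by linarith)
      · exact Real.rpow_le_rpow_of_nonpos (by linarith) (by linarith) (by linarith)
    have gint : IntegrableOn g (Ioi 0) := by
      refine hf.mono' ((contOnAux a b H hH0.le).aestronglyMeasurable measurableSet_Ioi) ?_
      rw [ae_restrict_iff' measurableSet_Ioi]
      filter_upwards with x hx
      rw [Real.norm_eq_abs, abs_of_nonneg (gnonneg x (le_of_lt hx))]
      exact gle x hx
    have gsum : Summable (fun j : ℕ => g j) := by
      have maj : Summable (fun j : ℕ => ((j:ℝ) + 1) ^ (-(a+b))) := by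
        have h1 : Summable (fun n : ℕ => (n:ℝ) ^ (-(a+b))) :=
          Real.summable_nat_rpow.mpr (by linarith)
        have h2 := (summable_nat_add_iff 1).mpr h1
        refine h2.congr fun n => ?_
        push_cast
        ring_nf
      refine Summable.of_nonneg_of_le (fun j => gnonneg _ (Nat.cast_nonneg j)) (fun j => ?_) maj
      have hj1 : (0:ℝ) < (j:ℝ) + 1 := by positivity
      calc g j ≤ ((j:ℝ)+1) ^ (-a) * ((j:ℝ)+1) ^ (-b) := by
            simp only [hgdef]
            refine mul_le_mul_of_nonneg_left ?_ (Real.rpow_nonneg (by linarith) _)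
            exact Real.rpow_le_rpow_of_nonpos hj1 (by linarith) (by linarith)
        _ = ((j:ℝ)+1) ^ (-(a+b)) := by
            rw [← Real.rpow_add hj1]; ring_nf
    have bounds := sumIntBoundsAux g ganti gnonneg gint gsum
    have hcov := covAux a b H hH0 hf gint
    have hP : (0:ℝ) < H ^ (1 - (a+b)) := Real.rpow_pos_of_pos hH0 _
    have hS : (∑' j : ℕ, ((j : ℝ) + 1) ^ (-a) * ((j : ℝ) + (h : ℝ) + 1) ^ (-b))
        = ∑' j : ℕ, g j := rfl
    rw [hS]
    rw [hcov] at bounds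
    constructor
    · rw [le_div_iff₀ hP]
      calc (∫ u in Ioi (1/H), u ^ (-a) * (u+1) ^ (-b)) * H ^ (1-(a+b))
          = H ^ (1-(a+b)) * ∫ u in Ioi (1/H), u ^ (-a) * (u+1) ^ (-b) := mul_comm _ _
        _ ≤ ∑' j : ℕ, g j := bounds.1
    · rw [div_le_iff₀ hP]
      have hg0 : g 0 = (H + 1) ^ (-b) := by simp [hgdef]
      have h1 : (H + 1) ^ (-b) ≤ H ^ (-b) :=
        Real.rpow_le_rpow_of_nonpos hH0 (by linarith) (by linarith)
      have h2 : H ^ (a-1) * H ^ (1 - (a+b)) = H ^ (-b) := by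
        rw [← Real.rpow_add hH0]; ring_nf
      have hb2 := bounds.2
      rw [hg0] at hb2
      have hI0 : 0 ≤ ∫ u in Ioi (1/H), u ^ (-a) * (u+1) ^ (-b) :=
        setIntegral_nonneg measurableSet_Ioi (fun x hx =>
          mul_nonneg (Real.rpow_nonneg (le_of_lt (lt_of_le_of_lt (by positivity) hx)) _)
            (Real.rpow_nonneg (by
              have : (0:ℝ) < x := lt_of_le_of_lt (by positivity) hx
              linarith) _))
      calc (∑' j : ℕ, g j)
          ≤ (H+1) ^ (-b) + H ^ (1-(a+b)) * ∫ u in Ioi (1/H), u ^ (-a) * (u+1) ^ (-b) := hb2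
        _ ≤ H ^ (-b) + H ^ (1-(a+b)) * ∫ u in Ioi (1/H), u ^ (-a) * (u+1) ^ (-b) := by linarith
        _ = ((∫ u in Ioi (1/H), u ^ (-a) * (u+1) ^ (-b)) + H ^ (a-1)) * H ^ (1-(a+b)) := by
            rw [add_mul, ← h2]
            ring
  refine tendsto_of_tendsto_of_tendsto_of_le_of_le' hlow hup ?_ ?_
  · filter_upwards [eventually_ge_atTop 1] with h hh
    exact (key h hh).1
  · filter_upwards [eventually_ge_atTop 1] with h hh
    exact (key h hh).2
end

section
/- Let a, b be reals with 1/2 < a < 1 and b > 1/2. For every positive integer h, Σ_{j=0}^∞ (j+1)^(−a)(j+h+1)^(−b) ≥ h^(1−(a+b)) · ∫_{1/h}^∞ x^(−a)(x+1)^(−b) dx, and Σ_{j=0}^∞ (j+1)^(−a)(j+h+1)^(−b) ≤ h^(1−(a+b)) · ∫_0^∞ x^(−a)(x+1)^(−b) dx. -/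
open MeasureTheory Set Real

lemma aux_Ioi_eq (c : ℝ) : Ioi c = ⋃ n : ℕ, Ioc (c + n) (c + n + 1) := by
  ext x
  simp only [mem_Ioi, mem_iUnion, mem_Ioc]
  constructor
  · intro hx
    have h1 : 1 ≤ ⌈x - c⌉₊ := Nat.one_le_ceil_iff.2 (by linarith)
    have h2 := Nat.ceil_lt_add_one (le_of_lt (by linarith : (0:ℝ) < x - c))
    have h3 := Nat.le_ceil (x - c)
    refine ⟨⌈x - c⌉₊ - 1, ?_, ?_⟩ <;> push_cast [Nat.cast_sub h1] <;> linarith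
  · rintro ⟨n, h1, _⟩
    have : (0:ℝ) ≤ n := n.cast_nonneg
    linarith

lemma aux_disj (c : ℝ) : Pairwise (Function.onFun Disjoint fun n : ℕ => Ioc (c + n) (c + n + 1)) := by
  intro m n hmn
  rcases hmn.lt_or_gt with hlt | hlt
  · apply Set.Ioc_disjoint_Ioc.2
    have : (m:ℝ) + 1 ≤ n := by exact_mod_cast hlt
    exact le_trans (min_le_left _ _) (le_trans (by linarith) (le_max_right _ _))
  · apply Set.Ioc_disjoint_Ioc.2
    have : (n:ℝ) + 1 ≤ m := by exact_mod_cast hlt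
    exact le_trans (min_le_right _ _) (le_trans (by linarith) (le_max_left _ _))

theorem stmt_3 (a b : ℝ) (ha : 1/2 < a) (ha1 : a < 1) (hb : 1/2 < b)
    (h : ℕ) (hh : 1 ≤ h) :
    (h : ℝ) ^ (1 - (a + b)) *
        ∫ x in Ioi (1 / (h : ℝ)), x ^ (-a) * (x + 1) ^ (-b) ≤
      (∑' j : ℕ, ((j : ℝ) + 1) ^ (-a) * ((j : ℝ) + (h : ℝ) + 1) ^ (-b)) ∧
    (∑' j : ℕ, ((j : ℝ) + 1) ^ (-a) * ((j : ℝ) + (h : ℝ) + 1) ^ (-b)) ≤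
      (h : ℝ) ^ (1 - (a + b)) * ∫ x in Ioi (0:ℝ), x ^ (-a) * (x + 1) ^ (-b) := by
  set H : ℝ := (h : ℝ) with hH
  have hH1 : 1 ≤ H := by rw [hH]; exact_mod_cast hh
  have hH0 : 0 < H := by linarith
  set g : ℝ → ℝ := fun t => t ^ (-a) * (t + H) ^ (-b) with hg
  -- antitonicity
  have hmono : ∀ x y : ℝ, 0 < x → x ≤ y → g y ≤ g x := by
    intro x y hx hxy
    have h1 : y ^ (-a) ≤ x ^ (-a) := rpow_le_rpow_of_nonpos hx hxy (by linarith)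
    have h2 : (y + H) ^ (-b) ≤ (x + H) ^ (-b) :=
      rpow_le_rpow_of_nonpos (by linarith) (by linarith) (by linarith)
    exact mul_le_mul h1 h2 (rpow_nonneg (by linarith) _) (rpow_nonneg hx.le _)
  have hgnn : ∀ x : ℝ, 0 < x → 0 ≤ g x := fun x hx =>
    mul_nonneg (rpow_nonneg hx.le _) (rpow_nonneg (by linarith) _)
  have hgm : Measurable g := by
    rw [hg]
    fun_prop
  -- integrability on Ioc 0 1
  have hi1 : IntegrableOn g (Ioc (0:ℝ) 1) := by
    have hmaj : IntegrableOn (fun x : ℝ => x ^ (-a)) (Ioc (0:ℝ) 1) := by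
      rw [← intervalIntegrable_iff_integrableOn_Ioc_of_le zero_le_one]
      exact intervalIntegral.intervalIntegrable_rpow' (by linarith)
    refine MeasureTheory.Integrable.mono hmaj (hgm.aestronglyMeasurable.restrict) ?_
    filter_upwards [ae_restrict_mem measurableSet_Ioc] with x hx
    have hx0 : 0 < x := hx.1
    rw [Real.norm_eq_abs, Real.norm_eq_abs, abs_of_nonneg (hgnn x hx0),
      abs_of_nonneg (rpow_nonneg hx0.le _)]
    have : (x + H) ^ (-b) ≤ 1 := by
      rw [show (1:ℝ) = (1:ℝ) ^ (-b) by simp]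
      exact rpow_le_rpow_of_nonpos one_pos (by linarith) (by linarith)
    calc g x ≤ x ^ (-a) * 1 := by
          exact mul_le_mul_of_nonneg_left this (rpow_nonneg hx0.le _)
      _ = x ^ (-a) := mul_one _
  -- integrability on Ioi 1
  have hi2 : IntegrableOn g (Ioi (1:ℝ)) := by
    have hmaj : IntegrableOn (fun x : ℝ => x ^ (-(a + b))) (Ioi (1:ℝ)) :=
      integrableOn_Ioi_rpow_of_lt (by linarith) one_pos
    refine MeasureTheory.Integrable.mono hmaj (hgm.aestronglyMeasurable.restrict) ?_
    filter_upwards [ae_restrict_mem measurableSet_Ioi] with x hx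
    have hx0 : (0:ℝ) < x := lt_trans one_pos hx
    rw [Real.norm_eq_abs, Real.norm_eq_abs, abs_of_nonneg (hgnn x hx0),
      abs_of_nonneg (rpow_nonneg hx0.le _)]
    have h2 : (x + H) ^ (-b) ≤ x ^ (-b) :=
      rpow_le_rpow_of_nonpos hx0 (by linarith) (by linarith)
    calc g x ≤ x ^ (-a) * x ^ (-b) :=
          mul_le_mul_of_nonneg_left h2 (rpow_nonneg hx0.le _)
      _ = x ^ (-(a + b)) := by rw [← Real.rpow_add hx0]; ring_nf
  have hi : IntegrableOn g (Ioi (0:ℝ)) := by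
    have : Ioi (0:ℝ) = Ioc 0 1 ∪ Ioi 1 := by
      rw [Set.Ioc_union_Ioi_eq_Ioi]; norm_num
    rw [this]
    exact hi1.union hi2
  -- decomposition into unit intervals
  have hdecomp : ∀ c : ℝ, 0 ≤ c →
      HasSum (fun n : ℕ => ∫ x in Ioc (c + n) (c + n + 1), g x) (∫ x in Ioi c, g x) := by
    intro c hc
    rw [aux_Ioi_eq c]
    refine hasSum_integral_iUnion (fun n => measurableSet_Ioc) (aux_disj c) ?_
    rw [← aux_Ioi_eq c]
    exact hi.mono_set (Ioi_subset_Ioi hc)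
  have hd0 := hdecomp 0 le_rfl
  have hd1 := hdecomp 1 zero_le_one
  -- per-interval bounds
  have hub : ∀ j : ℕ, g ((j:ℝ) + 1) ≤ ∫ x in Ioc ((0:ℝ) + j) (0 + j + 1), g x := by
    intro j
    have hmeas : MeasurableSet (Ioc ((0:ℝ) + j) (0 + j + 1)) := measurableSet_Ioc
    have hgint : IntegrableOn g (Ioc ((0:ℝ) + j) (0 + j + 1)) := by
      apply hi.mono_set
      intro x hx
      simp only [mem_Ioc, mem_Ioi] at *
      have : (0:ℝ) ≤ j := j.cast_nonneg
      linarith [hx.1]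
    have hle : ∀ x ∈ Ioc ((0:ℝ) + j) (0 + j + 1), g ((j:ℝ)+1) ≤ g x := by
      intro x hx
      have hx1 : (0:ℝ) + (j:ℝ) < x := hx.1
      have hx2 : x ≤ 0 + (j:ℝ) + 1 := hx.2
      have : (0:ℝ) ≤ j := j.cast_nonneg
      exact hmono x ((j:ℝ)+1) (by linarith) (by linarith)
    have hmain := setIntegral_mono_on
      (f := fun _ : ℝ => g ((j:ℝ)+1)) (g := g)
      (integrableOn_const measure_Ioc_lt_top.ne) hgint hmeas hle
    calc g ((j:ℝ) + 1) = (volume (Ioc ((0:ℝ) + j) (0 + j + 1))).toReal • g ((j:ℝ)+1) := by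
            rw [Real.volume_Ioc]; norm_num
      _ = ∫ _ in Ioc ((0:ℝ) + j) (0 + j + 1), g ((j:ℝ)+1) := (setIntegral_const _).symm
      _ ≤ ∫ x in Ioc ((0:ℝ) + j) (0 + j + 1), g x := hmain
  have hlb : ∀ j : ℕ, (∫ x in Ioc ((1:ℝ) + j) (1 + j + 1), g x) ≤ g ((j:ℝ) + 1) := by
    intro j
    have hmeas : MeasurableSet (Ioc ((1:ℝ) + j) (1 + j + 1)) := measurableSet_Ioc
    have hgint : IntegrableOn g (Ioc ((1:ℝ) + j) (1 + j + 1)) := by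
      apply hi.mono_set
      intro x hx
      simp only [mem_Ioc, mem_Ioi] at *
      have : (0:ℝ) ≤ j := j.cast_nonneg
      linarith [hx.1]
    have hle : ∀ x ∈ Ioc ((1:ℝ) + j) (1 + j + 1), g x ≤ g ((j:ℝ)+1) := by
      intro x hx
      have hx1 : (1:ℝ) + (j:ℝ) < x := hx.1
      have : (0:ℝ) ≤ j := j.cast_nonneg
      exact hmono ((j:ℝ)+1) x (by linarith) (by linarith)
    have hmain := setIntegral_mono_on
      (f := g) (g := fun _ : ℝ => g ((j:ℝ)+1))
      hgint (integrableOn_const measure_Ioc_lt_top.ne) hmeas hle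
    calc (∫ x in Ioc ((1:ℝ) + j) (1 + j + 1), g x)
          ≤ ∫ _ in Ioc ((1:ℝ) + j) (1 + j + 1), g ((j:ℝ)+1) := hmain
      _ = (volume (Ioc ((1:ℝ) + j) (1 + j + 1))).toReal • g ((j:ℝ)+1) := setIntegral_const _
      _ = g ((j:ℝ) + 1) := by rw [Real.volume_Ioc]; norm_num
  -- summability
  have hsummable : Summable (fun j : ℕ => g ((j:ℝ) + 1)) := by
    refine Summable.of_nonneg_of_le (fun j => hgnn _ (by positivity)) hub hd0.summable
  -- the two comparisons
  have hcomp1 : (∫ x in Ioi (1:ℝ), g x) ≤ ∑' j : ℕ, g ((j:ℝ) + 1) := by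
    rw [← hd1.tsum_eq]
    exact hd1.summable.tsum_le_tsum hlb hsummable
  have hcomp2 : (∑' j : ℕ, g ((j:ℝ) + 1)) ≤ ∫ x in Ioi (0:ℝ), g x := by
    rw [← hd0.tsum_eq]
    exact hsummable.tsum_le_tsum hub hd0.summable
  -- tsum in statement equals tsum of g
  have htsum : (∑' j : ℕ, ((j : ℝ) + 1) ^ (-a) * ((j : ℝ) + H + 1) ^ (-b))
      = ∑' j : ℕ, g ((j:ℝ) + 1) := by
    apply tsum_congr
    intro j
    simp only [hg]
    ring_nf
  -- change of variables
  have hchange : ∀ c : ℝ, 0 ≤ c →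
      H ^ (1 - (a + b)) * (∫ x in Ioi (c / H), x ^ (-a) * (x + 1) ^ (-b))
        = ∫ x in Ioi c, g x := by
    intro c hc
    have key := integral_comp_mul_left_Ioi (fun x : ℝ => x ^ (-a) * (x + 1) ^ (-b)) c
      (b := H⁻¹) (by positivity)
    rw [show H⁻¹ * c = c / H by ring] at key
    have hcongr : (∫ x in Ioi c, (H⁻¹ * x) ^ (-a) * (H⁻¹ * x + 1) ^ (-b))
        = ∫ x in Ioi c, H ^ (a + b) * g x := by
      apply setIntegral_congr_fun measurableSet_Ioi
      intro x hx
      have hx0 : 0 < x := lt_of_le_of_lt hc hx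
      show (H⁻¹ * x) ^ (-a) * (H⁻¹ * x + 1) ^ (-b) = H ^ (a + b) * g x
      have e1 : (H⁻¹ * x) ^ (-a) = H ^ a * x ^ (-a) := by
        rw [Real.mul_rpow (by positivity) hx0.le, Real.inv_rpow hH0.le,
          ← Real.rpow_neg hH0.le, neg_neg]
      have e2 : (H⁻¹ * x + 1) ^ (-b) = H ^ b * (x + H) ^ (-b) := by
        have hxx : H⁻¹ * x + 1 = H⁻¹ * (x + H) := by field_simp
        rw [hxx, Real.mul_rpow (by positivity) (by linarith), Real.inv_rpow hH0.le,
          ← Real.rpow_neg hH0.le, neg_neg]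
      rw [e1, e2, hg]
      rw [show H ^ a * x ^ (-a) * (H ^ b * (x + H) ^ (-b))
          = H ^ a * H ^ b * (x ^ (-a) * (x + H) ^ (-b)) by ring, ← Real.rpow_add hH0]
    beta_reduce at key
    rw [hcongr, integral_const_mul, smul_eq_mul, inv_inv] at key
    -- key : H ^ (a+b) * ∫ g = H * ∫ f
    have h1 : (∫ x in Ioi (c / H), x ^ (-a) * (x + 1) ^ (-b))
        = H⁻¹ * (H ^ (a + b) * (∫ x in Ioi c, g x)) := by
      rw [key, ← mul_assoc, inv_mul_cancel₀ hH0.ne', one_mul]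
    rw [h1]
    rw [show H ^ (1 - (a + b)) * (H⁻¹ * (H ^ (a + b) * (∫ x in Ioi c, g x)))
        = (H⁻¹ * (H ^ (1 - (a + b)) * H ^ (a + b))) * (∫ x in Ioi c, g x) by ring]
    rw [← Real.rpow_add hH0, show 1 - (a + b) + (a + b) = 1 by ring, Real.rpow_one,
      inv_mul_cancel₀ hH0.ne', one_mul]
  have hc1 := hchange 1 zero_le_one
  have hc0 := hchange 0 le_rfl
  rw [show (1:ℝ) / H = 1 / H by rfl] at hc1
  rw [zero_div] at hc0
  constructor
  · rw [htsum, show (1:ℝ)/(h:ℝ) = 1/H from rfl]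
    calc H ^ (1 - (a + b)) * (∫ x in Ioi (1/H), x ^ (-a) * (x + 1) ^ (-b))
        = ∫ x in Ioi (1:ℝ), g x := hc1
      _ ≤ ∑' j : ℕ, g ((j:ℝ) + 1) := hcomp1
  · rw [htsum]
    calc (∑' j : ℕ, g ((j:ℝ) + 1)) ≤ ∫ x in Ioi (0:ℝ), g x := hcomp2
      _ = H ^ (1 - (a + b)) * ∫ x in Ioi (0:ℝ), x ^ (-a) * (x + 1) ^ (-b) := hc0.symm
end

section
/- Let a > 1/2 and b > 1/2 be reals. The double series Σ_{h=1}^∞ Σ_{j=1}^∞ (j+1)^(−a)(j+h+1)^(−b) converges if and only if both b > 1 and a + b > 2. -/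
open Real

lemma aux_shift_summable (c : ℝ) (k : ℕ) (hk : 0 < k) :
    Summable (fun n : ℕ => ((n : ℝ) + k) ^ c) ↔ c < -1 := by
  have h := summable_nat_add_iff (f := fun n : ℕ => (n : ℝ) ^ c) k
  rw [Real.summable_nat_rpow] at h
  rw [← h]
  exact summable_congr fun n => by push_cast; ring_nf

set_option maxHeartbeats 1000000 in
theorem stmt_5 (a b : ℝ) (ha : 1/2 < a) (hb : 1/2 < b) :
    Summable (fun p : ℕ × ℕ =>
        ((p.2 : ℝ) + 2) ^ (-a) * ((p.2 : ℝ) + (p.1 : ℝ) + 3) ^ (-b)) ↔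
      (1 < b ∧ 2 < a + b) := by
  set f : ℕ × ℕ → ℝ := fun p =>
      ((p.2 : ℝ) + 2) ^ (-a) * ((p.2 : ℝ) + (p.1 : ℝ) + 3) ^ (-b) with hfdef
  have hfnonneg : 0 ≤ f := fun p => by
    have h1 : (0:ℝ) < (p.2 : ℝ) + 2 := by positivity
    have h2 : (0:ℝ) < (p.2 : ℝ) + (p.1 : ℝ) + 3 := by positivity
    positivity
  constructor
  · intro hf
    -- b > 1
    have hinj : Function.Injective (fun h : ℕ => (h, 0)) := fun x y hxy => by
      simpa using hxy
    have h1 : Summable fun h : ℕ => f (h, 0) := hf.comp_injective hinj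
    have h2 : Summable fun h : ℕ => (2:ℝ) ^ (-a) * ((h : ℝ) + 3) ^ (-b) := by
      refine h1.congr fun h => ?_
      simp [hfdef]
    have h2a : (0:ℝ) < (2:ℝ) ^ (-a) := by positivity
    have h3 : Summable fun h : ℕ => ((h : ℝ) + 3) ^ (-b) :=
      (summable_mul_left_iff h2a.ne').1 h2
    have hb1 : 1 < b := by
      have := (aux_shift_summable (-b) 3 (by norm_num)).1 (by simpa using h3)
      linarith
    refine ⟨hb1, ?_⟩
    -- a + b > 2
    have hg : Summable fun q : ℕ × ℕ => f (q.2, q.1) := by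
      have := (Equiv.prodComm ℕ ℕ).summable_iff.2 hf
      exact this.congr fun q => rfl
    have hgnonneg : 0 ≤ fun q : ℕ × ℕ => f (q.2, q.1) := fun q => hfnonneg (q.2, q.1)
    have hT : Summable fun j : ℕ => ∑' h : ℕ, f (h, j) :=
      ((summable_prod_of_nonneg hgnonneg).1 hg).2
    have hTj : ∀ j : ℕ, Summable fun h : ℕ => f (h, j) := fun j =>
      ((summable_prod_of_nonneg hgnonneg).1 hg).1 j
    set c : ℝ := (2:ℝ) ^ (-a) * (3:ℝ) ^ (-b) with hc
    have hcpos : 0 < c := by positivity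
    have hlow : ∀ j : ℕ, c * ((j : ℝ) + 1) ^ (1 - a - b) ≤ ∑' h : ℕ, f (h, j) := by
      intro j
      have hsum : ∑ h ∈ Finset.range (j + 1), f (h, j) ≤ ∑' h : ℕ, f (h, j) :=
        (hTj j).sum_le_tsum _ (fun h _ => hfnonneg _)
      have hterm : ∀ h ∈ Finset.range (j + 1),
          ((j : ℝ) + 2) ^ (-a) * (2 * (j : ℝ) + 3) ^ (-b) ≤ f (h, j) := by
        intro h hh
        simp only [Finset.mem_range] at hh
        have hh' : (h : ℝ) ≤ j := by exact_mod_cast Nat.lt_succ_iff.1 hh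
        have hbase : (0:ℝ) < (j : ℝ) + (h : ℝ) + 3 := by positivity
        refine mul_le_mul_of_nonneg_left ?_ (by positivity)
        exact Real.rpow_le_rpow_of_nonpos hbase (by linarith) (by linarith)
      have hcard : ((j : ℝ) + 1) * (((j : ℝ) + 2) ^ (-a) * (2 * (j : ℝ) + 3) ^ (-b))
          ≤ ∑ h ∈ Finset.range (j + 1), f (h, j) := by
        have := Finset.card_nsmul_le_sum (Finset.range (j + 1))
          (fun h => f (h, j)) _ hterm
        simpa [nsmul_eq_mul, Finset.card_range] using this
      have hstep : c * ((j : ℝ) + 1) ^ (1 - a - b)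
          ≤ ((j : ℝ) + 1) * (((j : ℝ) + 2) ^ (-a) * (2 * (j : ℝ) + 3) ^ (-b)) := by
        have hj1 : (0:ℝ) < (j : ℝ) + 1 := by positivity
        have e1 : ((j : ℝ) + 2) ^ (-a) ≥ (2 * ((j : ℝ) + 1)) ^ (-a) :=
          Real.rpow_le_rpow_of_nonpos (by positivity) (by linarith) (by linarith)
        have e2 : (2 * (j : ℝ) + 3) ^ (-b) ≥ (3 * ((j : ℝ) + 1)) ^ (-b) :=
          Real.rpow_le_rpow_of_nonpos (by positivity) (by linarith) (by linarith)
        have key : ((j : ℝ) + 1) * ((2 * ((j : ℝ) + 1)) ^ (-a) * (3 * ((j : ℝ) + 1)) ^ (-b))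
            = c * ((j : ℝ) + 1) ^ (1 - a - b) := by
          rw [Real.mul_rpow (by norm_num) hj1.le, Real.mul_rpow (by norm_num) hj1.le, hc]
          rw [show (1 : ℝ) - a - b = 1 + (-a) + (-b) by ring,
            Real.rpow_add hj1, Real.rpow_add hj1, Real.rpow_one]
          ring
        calc c * ((j : ℝ) + 1) ^ (1 - a - b)
            = ((j : ℝ) + 1) * ((2 * ((j : ℝ) + 1)) ^ (-a) * (3 * ((j : ℝ) + 1)) ^ (-b)) :=
              key.symm
          _ ≤ ((j : ℝ) + 1) * (((j : ℝ) + 2) ^ (-a) * (2 * (j : ℝ) + 3) ^ (-b)) := by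
              refine mul_le_mul_of_nonneg_left ?_ hj1.le
              exact mul_le_mul e1 e2 (by positivity) (by positivity)
      linarith
    have hsum2 : Summable fun j : ℕ => c * ((j : ℝ) + 1) ^ (1 - a - b) :=
      Summable.of_nonneg_of_le (fun j => by positivity) hlow hT
    have hsum3 : Summable fun j : ℕ => ((j : ℝ) + 1) ^ (1 - a - b) :=
      (summable_mul_left_iff hcpos.ne').1 hsum2
    have := (aux_shift_summable (1 - a - b) 1 (by norm_num)).1 (by simpa using hsum3)
    linarith
  · rintro ⟨hb1, hab⟩
    set t : ℝ := (1 + min b (a + b - 1)) / 2 with htdef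
    have hmin : 1 < min b (a + b - 1) := lt_min hb1 (by linarith)
    have ht1 : 1 < t := by
      rw [htdef]; linarith
    have htb : t < b := by
      have : min b (a + b - 1) ≤ b := min_le_left _ _
      rw [htdef]; linarith
    have hta : t < a + b - 1 := by
      have : min b (a + b - 1) ≤ a + b - 1 := min_le_right _ _
      rw [htdef]; linarith
    set s : ℝ := b - t with hsdef
    have hs : 0 ≤ s := by rw [hsdef]; linarith
    have has : 1 < a + s := by rw [hsdef]; linarith
    have hsum1 : Summable fun h : ℕ => ((h : ℝ) + 1) ^ (-t) := by
      refine (aux_shift_summable (-t) 1 (by norm_num)).2 (by linarith) |>.congr fun n => ?_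
      norm_cast
    have hsum2 : Summable fun j : ℕ => ((j : ℝ) + 2) ^ (-(a + s)) := by
      refine (aux_shift_summable (-(a + s)) 2 (by norm_num)).2 (by linarith) |>.congr
        fun n => ?_
      norm_cast
    have hprod : Summable fun p : ℕ × ℕ =>
        ((p.1 : ℝ) + 1) ^ (-t) * ((p.2 : ℝ) + 2) ^ (-(a + s)) :=
      hsum1.mul_of_nonneg hsum2 (fun h => by positivity) (fun j => by positivity)
    refine Summable.of_nonneg_of_le (fun p => hfnonneg p) (fun p => ?_) hprod
    obtain ⟨h, j⟩ := p
    simp only [hfdef]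
    have h2 : (0:ℝ) < (j : ℝ) + 2 := by positivity
    have h3 : (0:ℝ) < (j : ℝ) + (h : ℝ) + 3 := by positivity
    have hh0 : (0:ℝ) ≤ (h : ℝ) := Nat.cast_nonneg h
    have hj0 : (0:ℝ) ≤ (j : ℝ) := Nat.cast_nonneg j
    have e0 : ((j : ℝ) + (h : ℝ) + 3) ^ (-b)
        = ((j : ℝ) + (h : ℝ) + 3) ^ (-s) * ((j : ℝ) + (h : ℝ) + 3) ^ (-t) := by
      rw [← Real.rpow_add h3, hsdef]; ring_nf
    have e1 : ((j : ℝ) + (h : ℝ) + 3) ^ (-s) ≤ ((j : ℝ) + 2) ^ (-s) :=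
      Real.rpow_le_rpow_of_nonpos h2 (by linarith) (by linarith)
    have e2 : ((j : ℝ) + (h : ℝ) + 3) ^ (-t) ≤ ((h : ℝ) + 1) ^ (-t) :=
      Real.rpow_le_rpow_of_nonpos (by positivity) (by linarith) (by linarith)
    have e3 : ((j : ℝ) + 2) ^ (-(a + s)) = ((j : ℝ) + 2) ^ (-a) * ((j : ℝ) + 2) ^ (-s) := by
      rw [← Real.rpow_add h2]; ring_nf
    calc ((j : ℝ) + 2) ^ (-a) * ((j : ℝ) + (h : ℝ) + 3) ^ (-b)
        = ((j : ℝ) + 2) ^ (-a) * (((j : ℝ) + (h : ℝ) + 3) ^ (-s)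
            * ((j : ℝ) + (h : ℝ) + 3) ^ (-t)) := by rw [e0]
      _ ≤ ((j : ℝ) + 2) ^ (-a) * (((j : ℝ) + 2) ^ (-s) * ((h : ℝ) + 1) ^ (-t)) := by
          refine mul_le_mul_of_nonneg_left ?_ (by positivity)
          exact mul_le_mul e1 e2 (by positivity) (by positivity)
      _ = ((h : ℝ) + 1) ^ (-t) * ((j : ℝ) + 2) ^ (-(a + s)) := by rw [e3]; ring
end

section
/- Let a, b be reals with 1/2 < a < 1 and 1/2 < b < 1. Then Σ_{k=1}^{n−1} S(k) ~ [c(a,b)/(2−(a+b))] · n^(2−(a+b)) as n → ∞, where S(k) := Σ_{j=0}^∞ (j+1)^(−a)(j+k+1)^(−b) and c(a,b) := ∫₀^∞ x^(−a)(x+1)^(−b) dx. -/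
open MeasureTheory Set Filter intervalIntegral Topology

-- const lower bound on interval integral
lemma my_const_le_int {f : ℝ → ℝ} {u v c : ℝ} (huv : u ≤ v)
    (hfi : IntegrableOn f (Ioc u v)) (hc : ∀ x ∈ Ioc u v, c ≤ f x) :
    (v - u) * c ≤ ∫ x in u..v, f x := by
  rw [intervalIntegral.integral_of_le huv]
  have h1 : ∫ x in Ioc u v, (fun _ => c) x ≤ ∫ x in Ioc u v, f x := by
    apply setIntegral_mono_on _ hfi measurableSet_Ioc hc
    exact integrableOn_const measure_Ioc_lt_top.ne
  have h2 : ∫ x in Ioc u v, (fun _ => c) x = (v - u) * c := by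
    simp [Real.volume_Ioc, ENNReal.toReal_ofReal (sub_nonneg.2 huv), huv]
  linarith

lemma my_int_le_const {f : ℝ → ℝ} {u v c : ℝ} (huv : u ≤ v)
    (hfi : IntegrableOn f (Ioc u v)) (hc : ∀ x ∈ Ioc u v, f x ≤ c) :
    ∫ x in u..v, f x ≤ (v - u) * c := by
  rw [intervalIntegral.integral_of_le huv]
  have h1 : ∫ x in Ioc u v, f x ≤ ∫ x in Ioc u v, (fun _ => c) x := by
    apply setIntegral_mono_on hfi _ measurableSet_Ioc hc
    exact integrableOn_const measure_Ioc_lt_top.ne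
  have h2 : ∫ x in Ioc u v, (fun _ => c) x = (v - u) * c := by
    simp [Real.volume_Ioc, ENNReal.toReal_ofReal (sub_nonneg.2 huv), huv]
  linarith

lemma stepB {p : ℝ} (hp : -1 < p) (hp0 : p < 0) :
    Tendsto (fun n : ℕ => (∑ k ∈ Finset.range n, (k : ℝ) ^ p) / (n : ℝ) ^ (p + 1))
      atTop (𝓝 (1 / (p + 1))) := by
  have hp1 : 0 < p + 1 := by linarith
  have hint : ∀ u v : ℝ, IntervalIntegrable (fun x : ℝ => x ^ p) volume u v :=
    fun u v => intervalIntegrable_rpow' hp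
  have key : ∀ m : ℕ,
      (((m : ℝ) + 1) ^ (p + 1) - 1) / (p + 1) ≤ (∑ k ∈ Finset.range (m + 1), (k : ℝ) ^ p) ∧
      (∑ k ∈ Finset.range (m + 1), (k : ℝ) ^ p) ≤ (m : ℝ) ^ (p + 1) / (p + 1) := by
    intro m
    have hsum : (∑ k ∈ Finset.range (m + 1), (k : ℝ) ^ p)
        = ∑ i ∈ Finset.range m, ((i : ℝ) + 1) ^ p := by
      rw [Finset.sum_range_succ']
      simp [Real.zero_rpow (show p ≠ 0 by linarith)]
    constructor
    · -- lower bound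
      have h1 : ∀ i ∈ Finset.range m,
          (∫ x in ((i : ℝ) + 1)..((i : ℝ) + 1 + 1), x ^ p) ≤ ((i : ℝ) + 1) ^ p := by
        intro i _
        have := my_int_le_const (f := fun x : ℝ => x ^ p) (u := (i : ℝ) + 1)
          (v := (i : ℝ) + 1 + 1) (c := ((i : ℝ) + 1) ^ p) (by linarith)
          ((hint _ _).1) (fun x hx => Real.rpow_le_rpow_of_nonpos
            (by positivity) hx.1.le hp0.le)
        simpa using this
      have h2 : ∑ i ∈ Finset.range m, (∫ x in ((i : ℝ) + 1)..((i : ℝ) + 1 + 1), x ^ p)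
          = ∫ x in (1 : ℝ)..((m : ℝ) + 1), x ^ p := by
        have := intervalIntegral.sum_integral_adjacent_intervals
          (a := fun i : ℕ => (i : ℝ) + 1) (n := m) (f := fun x : ℝ => x ^ p)
          (fun i _ => hint _ _)
        simpa [Nat.cast_succ] using this
      have h3 : ∫ x in (1 : ℝ)..((m : ℝ) + 1), x ^ p
          = (((m : ℝ) + 1) ^ (p + 1) - 1) / (p + 1) := by
        rw [integral_rpow (Or.inl hp)]
        simp [Real.one_rpow]
      rw [hsum, ← h3, ← h2]
      exact Finset.sum_le_sum h1
    · -- upper bound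
      have h1 : ∀ i ∈ Finset.range m,
          ((i : ℝ) + 1) ^ p ≤ ∫ x in ((i : ℝ))..((i : ℝ) + 1), x ^ p := by
        intro i _
        have := my_const_le_int (f := fun x : ℝ => x ^ p) (u := (i : ℝ))
          (v := (i : ℝ) + 1) (c := ((i : ℝ) + 1) ^ p) (by linarith)
          ((hint _ _).1) (fun x hx => Real.rpow_le_rpow_of_nonpos
            (lt_of_le_of_lt (Nat.cast_nonneg i) hx.1) hx.2 hp0.le)
        simpa using this
      have h2 : ∑ i ∈ Finset.range m, (∫ x in ((i : ℝ))..((i : ℝ) + 1), x ^ p)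
          = ∫ x in (0 : ℝ)..((m : ℝ)), x ^ p := by
        have := intervalIntegral.sum_integral_adjacent_intervals
          (a := fun i : ℕ => (i : ℝ)) (n := m) (f := fun x : ℝ => x ^ p)
          (fun i _ => hint _ _)
        simpa [Nat.cast_succ] using this
      have h3 : ∫ x in (0 : ℝ)..((m : ℝ)), x ^ p = (m : ℝ) ^ (p + 1) / (p + 1) := by
        rw [integral_rpow (Or.inl hp)]
        simp [Real.zero_rpow (show p + 1 ≠ 0 by linarith)]
      rw [hsum, ← h3, ← h2]
      exact Finset.sum_le_sum h1
  -- squeeze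
  have hL : Tendsto (fun n : ℕ => (1 - ((n : ℝ)) ^ (-(p + 1))) / (p + 1)) atTop
      (𝓝 (1 / (p + 1))) := by
    have : Tendsto (fun n : ℕ => ((n : ℝ)) ^ (-(p + 1))) atTop (𝓝 0) :=
      (tendsto_rpow_neg_atTop hp1).comp tendsto_natCast_atTop_atTop
    have := (tendsto_const_nhds (x := (1 : ℝ)) (f := atTop)).sub this
    simpa using this.div_const (p + 1)
  have hU : Tendsto (fun n : ℕ => ((1 : ℝ) - 1 / n) ^ (p + 1) / (p + 1)) atTop
      (𝓝 (1 / (p + 1))) := by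
    have h0 : Tendsto (fun n : ℕ => (1 : ℝ) - 1 / n) atTop (𝓝 1) := by
      have := tendsto_one_div_atTop_nhds_zero_nat (𝕜 := ℝ)
      simpa using (tendsto_const_nhds (x := (1 : ℝ)) (f := atTop)).sub this
    have := (h0.rpow_const (p := p + 1) (Or.inl one_ne_zero)).div_const (p + 1)
    simpa using this
  apply tendsto_of_tendsto_of_tendsto_of_le_of_le' hL hU
  · filter_upwards [eventually_ge_atTop 1] with n hn
    obtain ⟨m, rfl⟩ : ∃ m, n = m + 1 := ⟨n - 1, (Nat.succ_pred_eq_of_pos hn).symm⟩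
    have hnpos : (0 : ℝ) < ((m : ℕ) : ℝ) + 1 := by positivity
    have hpow : (0 : ℝ) < (((m : ℝ) + 1)) ^ (p + 1) := Real.rpow_pos_of_pos hnpos _
    have := (key m).1
    have heq : (1 - (((m : ℝ) + 1)) ^ (-(p + 1))) / (p + 1)
        = ((((m : ℝ) + 1)) ^ (p + 1) - 1) / (p + 1) / (((m : ℝ) + 1)) ^ (p + 1) := by
      rw [Real.rpow_neg hnpos.le]
      field_simp
    calc (1 - ((m + 1 : ℕ) : ℝ) ^ (-(p + 1))) / (p + 1)
        = (1 - (((m : ℝ) + 1)) ^ (-(p + 1))) / (p + 1) := by push_cast; ring_nf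
      _ = ((((m : ℝ) + 1)) ^ (p + 1) - 1) / (p + 1) / (((m : ℝ) + 1)) ^ (p + 1) := heq
      _ ≤ (∑ k ∈ Finset.range (m + 1), (k : ℝ) ^ p) / (((m : ℝ) + 1)) ^ (p + 1) := by
          gcongr
      _ = (∑ k ∈ Finset.range (m + 1), (k : ℝ) ^ p) / (((m + 1 : ℕ) : ℝ)) ^ (p + 1) := by
          push_cast; ring_nf
  · filter_upwards [eventually_ge_atTop 1] with n hn
    obtain ⟨m, rfl⟩ : ∃ m, n = m + 1 := ⟨n - 1, (Nat.succ_pred_eq_of_pos hn).symm⟩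
    have hnpos : (0 : ℝ) < ((m : ℕ) : ℝ) + 1 := by positivity
    have hpow : (0 : ℝ) < (((m : ℝ) + 1)) ^ (p + 1) := Real.rpow_pos_of_pos hnpos _
    have := (key m).2
    have heq : ((1 : ℝ) - 1 / ((m + 1 : ℕ) : ℝ)) ^ (p + 1) / (p + 1)
        = (m : ℝ) ^ (p + 1) / (p + 1) / (((m : ℝ) + 1)) ^ (p + 1) := by
      have h1 : (1 : ℝ) - 1 / ((m + 1 : ℕ) : ℝ) = (m : ℝ) / ((m : ℝ) + 1) := by
        push_cast; field_simp; ring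
      rw [h1, Real.div_rpow (Nat.cast_nonneg m) hnpos.le]
      ring
    calc (∑ k ∈ Finset.range (m + 1), (k : ℝ) ^ p) / (((m + 1 : ℕ) : ℝ)) ^ (p + 1)
        = (∑ k ∈ Finset.range (m + 1), (k : ℝ) ^ p) / (((m : ℝ) + 1)) ^ (p + 1) := by
          push_cast; ring_nf
      _ ≤ (m : ℝ) ^ (p + 1) / (p + 1) / (((m : ℝ) + 1)) ^ (p + 1) := by gcongr
      _ = ((1 : ℝ) - 1 / ((m + 1 : ℕ) : ℝ)) ^ (p + 1) / (p + 1) := heq.symm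

section
variable {a b : ℝ}

lemma my_f_anti (ha : 0 < a) (hb : 0 < b) {x y : ℝ} (hx : 0 < x) (hxy : x ≤ y) :
    y ^ (-a) * (y + 1) ^ (-b) ≤ x ^ (-a) * (x + 1) ^ (-b) := by
  have hy : 0 < y := lt_of_lt_of_le hx hxy
  apply mul_le_mul
  · exact Real.rpow_le_rpow_of_nonpos hx hxy (by linarith)
  · exact Real.rpow_le_rpow_of_nonpos (by linarith) (by linarith) (by linarith)
  · positivity
  · positivity

lemma my_f_integrable (ha : 0 < a) (ha1 : a < 1) (hb : 0 < b) (hab : 1 < a + b) :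
    IntegrableOn (fun x : ℝ => x ^ (-a) * (x + 1) ^ (-b)) (Ioi 0) := by
  have hmeas : Measurable (fun x : ℝ => x ^ (-a) * (x + 1) ^ (-b)) := by fun_prop
  rw [← Ioc_union_Ioi_eq_Ioi (zero_le_one (α := ℝ))]
  apply IntegrableOn.union
  · apply Integrable.mono' (g := fun x : ℝ => x ^ (-a))
    · exact (intervalIntegrable_iff_integrableOn_Ioc_of_le zero_le_one).1
        (intervalIntegrable_rpow' (by linarith))
    · exact hmeas.aestronglyMeasurable.restrict
    · rw [ae_restrict_iff' measurableSet_Ioc]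
      filter_upwards with x hx
      have hx0 : 0 < x := hx.1
      rw [Real.norm_eq_abs, abs_of_nonneg (by positivity)]
      calc x ^ (-a) * (x + 1) ^ (-b) ≤ x ^ (-a) * 1 := by
            apply mul_le_mul_of_nonneg_left _ (by positivity)
            exact Real.rpow_le_one_of_one_le_of_nonpos (by linarith) (by linarith)
        _ = x ^ (-a) := mul_one _
  · apply Integrable.mono' (g := fun x : ℝ => x ^ (-(a + b)))
    · exact integrableOn_Ioi_rpow_of_lt (by linarith) one_pos
    · exact hmeas.aestronglyMeasurable.restrict
    · rw [ae_restrict_iff' measurableSet_Ioi]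
      filter_upwards with x hx
      have hx0 : (0 : ℝ) < x := lt_trans one_pos hx
      rw [Real.norm_eq_abs, abs_of_nonneg (by positivity)]
      calc x ^ (-a) * (x + 1) ^ (-b) ≤ x ^ (-a) * x ^ (-b) := by
            apply mul_le_mul_of_nonneg_left _ (by positivity)
            exact Real.rpow_le_rpow_of_nonpos hx0 (by linarith) (by linarith)
        _ = x ^ (-(a + b)) := by rw [← Real.rpow_add hx0]; ring_nf
end

lemma my_summable {a b : ℝ} (ha : 0 < a) (hb : 0 < b) (hab : 1 < a + b) (k : ℕ) :
    Summable (fun j : ℕ => ((j : ℝ) + 1) ^ (-a) * ((j : ℝ) + (k : ℝ) + 1) ^ (-b)) := by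
  have hS : Summable (fun j : ℕ => ((j : ℝ) + 1) ^ (-(a + b))) := by
    have := (Real.summable_nat_rpow (p := -(a + b))).2 (by linarith)
    rw [← summable_nat_add_iff 1] at this
    exact this.congr fun j => by push_cast; ring_nf
  apply Summable.of_nonneg_of_le (fun j => by positivity) _ hS
  intro j
  have hj : (0 : ℝ) < (j : ℝ) + 1 := by positivity
  calc ((j : ℝ) + 1) ^ (-a) * ((j : ℝ) + (k : ℝ) + 1) ^ (-b)
      ≤ ((j : ℝ) + 1) ^ (-a) * ((j : ℝ) + 1) ^ (-b) := by
        apply mul_le_mul_of_nonneg_left _ (by positivity)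
        exact Real.rpow_le_rpow_of_nonpos hj
          (by have : (0:ℝ) ≤ (k:ℝ) := Nat.cast_nonneg k; linarith) (by linarith)
    _ = ((j : ℝ) + 1) ^ (-(a + b)) := by rw [← Real.rpow_add hj]; ring_nf

set_option maxHeartbeats 1000000 in
lemma stepA {a b : ℝ} (ha : 0 < a) (ha1 : a < 1) (hb : 0 < b) (hb1 : b < 1) (hab : 1 < a + b) :
    Tendsto (fun k : ℕ => (k : ℝ) ^ (a + b - 1) *
        ∑' j : ℕ, ((j : ℝ) + 1) ^ (-a) * ((j : ℝ) + (k : ℝ) + 1) ^ (-b))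
      atTop (𝓝 (∫ x in Ioi (0 : ℝ), x ^ (-a) * (x + 1) ^ (-b))) := by
  let f : ℝ → ℝ := fun x => x ^ (-a) * (x + 1) ^ (-b)
  have hf : f = fun x => x ^ (-a) * (x + 1) ^ (-b) := rfl
  show Tendsto (fun k : ℕ => (k : ℝ) ^ (a + b - 1) *
      ∑' j : ℕ, ((j : ℝ) + 1) ^ (-a) * ((j : ℝ) + (k : ℝ) + 1) ^ (-b)) atTop
      (𝓝 (∫ x in Ioi (0 : ℝ), f x))
  have hfi : IntegrableOn f (Ioi 0) := my_f_integrable ha ha1 hb hab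
  have hfnn : ∀ x : ℝ, 0 ≤ x → 0 ≤ f x := fun x hx => by
    simp only [hf]; positivity
  have hterm : ∀ k : ℕ, 0 < (k : ℝ) → ∀ j : ℕ,
      (k : ℝ) ^ (a + b - 1) * (((j : ℝ) + 1) ^ (-a) * ((j : ℝ) + (k : ℝ) + 1) ^ (-b))
        = (1 / (k : ℝ)) * f (((j : ℝ) + 1) / (k : ℝ)) := by
    intro k hK j
    set K := (k : ℝ) with hKdef
    have hJ : (0 : ℝ) < (j : ℝ) + 1 := by positivity
    have e1 : (((j : ℝ) + 1) / K) ^ (-a) = ((j : ℝ) + 1) ^ (-a) * K ^ a := by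
      rw [Real.div_rpow hJ.le hK.le, Real.rpow_neg hK.le]
      field_simp
    have e2 : (((j : ℝ) + 1) / K + 1) ^ (-b) = ((j : ℝ) + K + 1) ^ (-b) * K ^ b := by
      have h3 : ((j : ℝ) + 1) / K + 1 = ((j : ℝ) + K + 1) / K := by
        field_simp
        ring
      rw [h3, Real.div_rpow (by positivity) hK.le, Real.rpow_neg hK.le]
      field_simp
    have e3 : K ^ (a + b - 1) = K ^ a * K ^ b * (K ^ (1 : ℝ))⁻¹ := by
      rw [show a + b - 1 = a + b + (-1) by ring, Real.rpow_add hK, Real.rpow_add hK,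
        Real.rpow_neg hK.le]
    simp only [hf]
    rw [e1, e2, e3, Real.rpow_one]
    ring
  have hmid : ∀ k : ℕ, 1 ≤ k →
      (k : ℝ) ^ (a + b - 1) * (∑' j : ℕ, ((j : ℝ) + 1) ^ (-a) * ((j : ℝ) + (k : ℝ) + 1) ^ (-b))
        = ∑' j : ℕ, (1 / (k : ℝ)) * f (((j : ℝ) + 1) / (k : ℝ)) := by
    intro k hk
    have hK : (0 : ℝ) < k := by exact_mod_cast hk
    rw [← tsum_mul_left]
    exact tsum_congr (hterm k hK)
  have hsum2 : ∀ k : ℕ, 1 ≤ k →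
      Summable (fun j : ℕ => (1 / (k : ℝ)) * f (((j : ℝ) + 1) / (k : ℝ))) := by
    intro k hk
    have hK : (0 : ℝ) < k := by exact_mod_cast hk
    exact ((my_summable ha hb hab k).mul_left ((k : ℝ) ^ (a + b - 1))).congr (hterm k hK)
  have hII : ∀ u v : ℝ, 0 ≤ u → IntegrableOn f (Ioc u v) :=
    fun u v hu => hfi.mono_set (fun x hx => lt_of_le_of_lt hu hx.1)
  -- upper bound
  have hupper : ∀ k : ℕ, 1 ≤ k →
      (∑' j : ℕ, (1 / (k : ℝ)) * f (((j : ℝ) + 1) / (k : ℝ))) ≤ ∫ x in Ioi (0 : ℝ), f x := by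
    intro k hk
    have hK : (0 : ℝ) < k := by exact_mod_cast hk
    apply Summable.tsum_le_of_sum_le (hsum2 k hk)
    intro s
    obtain ⟨N, hN⟩ := s.exists_nat_subset_range
    have huv : ∀ j : ℕ, (j : ℝ) / (k : ℝ) ≤ ((j : ℝ) + 1) / (k : ℝ) := by
      intro j; gcongr; linarith
    calc ∑ j ∈ s, (1 / (k : ℝ)) * f (((j : ℝ) + 1) / (k : ℝ))
        ≤ ∑ j ∈ Finset.range N, (1 / (k : ℝ)) * f (((j : ℝ) + 1) / (k : ℝ)) := by
          apply Finset.sum_le_sum_of_subset_of_nonneg hN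
          intro j _ _
          have h0 : (0 : ℝ) ≤ f (((j : ℝ) + 1) / (k : ℝ)) := hfnn _ (by positivity)
          positivity
      _ ≤ ∑ j ∈ Finset.range N, ∫ x in ((j : ℝ) / (k : ℝ))..(((j : ℝ) + 1) / (k : ℝ)), f x := by
          apply Finset.sum_le_sum
          intro j _
          have h := my_const_le_int (huv j) (hII _ _ (by positivity))
            (fun x hx => my_f_anti ha hb (lt_of_le_of_lt (by positivity) hx.1) hx.2)
          have hvu : ((j : ℝ) + 1) / (k : ℝ) - (j : ℝ) / (k : ℝ) = 1 / (k : ℝ) := by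
            field_simp; ring
          rwa [hvu] at h
      _ = ∫ x in (0 : ℝ)..((N : ℝ) / (k : ℝ)), f x := by
          have h := intervalIntegral.sum_integral_adjacent_intervals
            (a := fun i : ℕ => (i : ℝ) / (k : ℝ)) (n := N) (f := f) (μ := volume)
            (fun i _ => by
              have h1 : ((i : ℕ) : ℝ) / (k : ℝ) ≤ (((i + 1 : ℕ)) : ℝ) / (k : ℝ) := by
                gcongr
                exact_mod_cast Nat.le_succ i
              exact (intervalIntegrable_iff_integrableOn_Ioc_of_le h1).2
                (hII _ _ (by positivity)))
          simp only [Nat.cast_succ, Nat.cast_zero, zero_div] at h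
          rw [← h]
      _ ≤ ∫ x in Ioi (0 : ℝ), f x := by
          rw [intervalIntegral.integral_of_le (by positivity)]
          apply setIntegral_mono_set hfi
          · exact (ae_restrict_iff' measurableSet_Ioi).2
              (Filter.Eventually.of_forall fun x hx => hfnn x hx.le)
          · exact HasSubset.Subset.eventuallyLE Ioc_subset_Ioi_self
  -- lower bound
  have hlower : ∀ k : ℕ, 1 ≤ k →
      (∫ x in Ioi (1 / (k : ℝ)), f x) ≤
        ∑' j : ℕ, (1 / (k : ℝ)) * f (((j : ℝ) + 1) / (k : ℝ)) := by
    intro k hk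
    have hK : (0 : ℝ) < k := by exact_mod_cast hk
    have hsub : Ioi (1 / (k : ℝ)) ⊆ Ioi (0 : ℝ) := Ioi_subset_Ioi (by positivity)
    have hb2 : Tendsto (fun N : ℕ => ((N : ℝ) + 1) / (k : ℝ)) atTop atTop := by
      apply Tendsto.atTop_div_const hK
      exact tendsto_atTop_add_const_right _ 1 tendsto_natCast_atTop_atTop
    have htend := MeasureTheory.intervalIntegral_tendsto_integral_Ioi (1 / (k : ℝ))
      (hfi.mono_set hsub) hb2
    apply le_of_tendsto htend
    filter_upwards with N
    have huv : ∀ j : ℕ, ((j : ℝ) + 1) / (k : ℝ) ≤ ((j : ℝ) + 1 + 1) / (k : ℝ) := by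
      intro j; gcongr; linarith
    have key : ∫ x in (1 / (k : ℝ))..(((N : ℝ) + 1) / (k : ℝ)), f x
        = ∑ j ∈ Finset.range N,
            ∫ x in (((j : ℝ) + 1) / (k : ℝ))..(((j : ℝ) + 1 + 1) / (k : ℝ)), f x := by
      have h := intervalIntegral.sum_integral_adjacent_intervals
        (a := fun i : ℕ => ((i : ℝ) + 1) / (k : ℝ)) (n := N) (f := f) (μ := volume)
        (fun i _ => by
          have h1 : ((i : ℝ) + 1) / (k : ℝ) ≤ (((i + 1 : ℕ) : ℝ) + 1) / (k : ℝ) := by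
            gcongr
            push_cast; linarith
          exact (intervalIntegrable_iff_integrableOn_Ioc_of_le h1).2
            (hII _ _ (by positivity)))
      simp only [Nat.cast_succ, Nat.cast_zero, zero_add] at h
      rw [← h]
    rw [key]
    calc ∑ j ∈ Finset.range N,
          ∫ x in (((j : ℝ) + 1) / (k : ℝ))..(((j : ℝ) + 1 + 1) / (k : ℝ)), f x
        ≤ ∑ j ∈ Finset.range N, (1 / (k : ℝ)) * f (((j : ℝ) + 1) / (k : ℝ)) := by
          apply Finset.sum_le_sum
          intro j _
          have h := my_int_le_const (huv j) (hII _ _ (by positivity))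
            (fun x hx => my_f_anti ha hb (by positivity) hx.1.le)
          have hvu : ((j : ℝ) + 1 + 1) / (k : ℝ) - ((j : ℝ) + 1) / (k : ℝ) = 1 / (k : ℝ) := by
            field_simp; ring
          rw [hvu] at h
          exact h
      _ ≤ ∑' j : ℕ, (1 / (k : ℝ)) * f (((j : ℝ) + 1) / (k : ℝ)) := by
          refine Summable.sum_le_tsum _ (fun j _ => ?_) (hsum2 k hk)
          have h0 : (0 : ℝ) ≤ f (((j : ℝ) + 1) / (k : ℝ)) := hfnn _ (by positivity)
          positivity
  -- L tendsto
  have hL : Tendsto (fun k : ℕ => ∫ x in Ioi (1 / (k : ℝ)), f x) atTop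
      (𝓝 (∫ x in Ioi (0 : ℝ), f x)) := by
    rw [← tendsto_add_atTop_iff_nat 1]
    have hUnion : (⋃ k : ℕ, Ioi (1 / ((k : ℝ) + 1))) = Ioi (0 : ℝ) := by
      ext x
      simp only [mem_iUnion, mem_Ioi]
      constructor
      · rintro ⟨k, hk⟩
        exact lt_trans (by positivity) hk
      · intro hx
        obtain ⟨k, hk⟩ := exists_nat_gt (1 / x)
        refine ⟨k, ?_⟩
        rw [div_lt_iff₀ (by positivity)]
        rw [div_lt_iff₀ hx] at hk
        nlinarith
    have hmono : Monotone (fun k : ℕ => Ioi (1 / ((k : ℝ) + 1))) := by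
      intro i j hij
      apply Ioi_subset_Ioi
      apply one_div_le_one_div_of_le (by positivity)
      have : (i : ℝ) ≤ (j : ℝ) := by exact_mod_cast hij
      linarith
    have h := MeasureTheory.tendsto_setIntegral_of_monotone
      (s := fun k : ℕ => Ioi (1 / ((k : ℝ) + 1))) (fun k => measurableSet_Ioi) hmono
      (by rw [hUnion]; exact hfi)
    rw [hUnion] at h
    convert h using 2 with k
    push_cast
    ring_nf
  -- squeeze
  apply tendsto_of_tendsto_of_tendsto_of_le_of_le' hL tendsto_const_nhds
  · filter_upwards [eventually_ge_atTop 1] with k hk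
    rw [hmid k hk]
    exact hlower k hk
  · filter_upwards [eventually_ge_atTop 1] with k hk
    rw [hmid k hk]
    exact hupper k hk

theorem stmt_8 (a b : ℝ) (ha : 1/2 < a) (ha1 : a < 1) (hb : 1/2 < b) (hb1 : b < 1) :
    Tendsto
      (fun n : ℕ =>
        (∑ k ∈ Finset.Ico 1 n,
            ∑' j : ℕ, ((j : ℝ) + 1) ^ (-a) * ((j : ℝ) + (k : ℝ) + 1) ^ (-b)) /
          (n : ℝ) ^ (2 - (a + b)))
      atTop
      (nhds ((∫ x in Ioi (0:ℝ), x ^ (-a) * (x + 1) ^ (-b)) / (2 - (a + b)))) := by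
  have ha0 : 0 < a := by linarith
  have hb0 : 0 < b := by linarith
  have hab : 1 < a + b := by linarith
  have hab2 : a + b < 2 := by linarith
  set p : ℝ := 1 - (a + b) with hpdef
  have hp : -1 < p := by simp only [hpdef]; linarith
  have hp0 : p < 0 := by simp only [hpdef]; linarith
  have hp1 : 0 < p + 1 := by linarith
  set c : ℝ := ∫ x in Ioi (0 : ℝ), x ^ (-a) * (x + 1) ^ (-b) with hcdef
  set S : ℕ → ℝ := fun k => ∑' j : ℕ, ((j : ℝ) + 1) ^ (-a) * ((j : ℝ) + (k : ℝ) + 1) ^ (-b)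
    with hSdef
  set g : ℕ → ℝ := fun k => (k : ℝ) ^ p with hgdef
  set e : ℕ → ℝ := fun k => if k = 0 then 0 else S k - c * g k with hedef
  have hA : Tendsto (fun k : ℕ => (k : ℝ) ^ (a + b - 1) * S k) atTop (𝓝 c) :=
    stepA ha0 ha1 hb0 hb1 hab
  have hB : Tendsto (fun n : ℕ => (∑ k ∈ Finset.range n, g k) / (n : ℝ) ^ (p + 1))
      atTop (𝓝 (1 / (p + 1))) := stepB hp hp0
  have hg_nonneg : ∀ k, 0 ≤ g k := fun k => Real.rpow_nonneg (Nat.cast_nonneg k) p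
  have hg0 : g 0 = 0 := by
    simp only [hgdef, Nat.cast_zero]
    exact Real.zero_rpow (by linarith)
  -- sum decomposition
  have hsum_eq : ∀ n : ℕ, (∑ k ∈ Finset.Ico 1 n, S k)
      = (∑ k ∈ Finset.range n, e k) + c * ∑ k ∈ Finset.range n, g k := by
    intro n
    rw [Finset.mul_sum, ← Finset.sum_add_distrib, Finset.range_eq_Ico]
    rcases Nat.eq_zero_or_pos n with h | h
    · simp [h]
    · rw [Finset.sum_eq_sum_Ico_succ_bot h]
      have h0 : e 0 + c * g 0 = 0 := by simp [hedef, hg0]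
      rw [h0, zero_add]
      apply Finset.sum_congr rfl
      intro k hk
      have hk1 : k ≠ 0 := by
        have := (Finset.mem_Ico.1 hk).1; omega
      simp only [hedef, if_neg hk1]
      ring
  -- sum of g tends to atTop
  have hgsum_top : Tendsto (fun n : ℕ => ∑ k ∈ Finset.range n, g k) atTop atTop := by
    have h1 : Tendsto (fun n : ℕ => ((n : ℝ)) ^ (p + 1)) atTop atTop :=
      (tendsto_rpow_atTop hp1).comp tendsto_natCast_atTop_atTop
    have h2 := hB.pos_mul_atTop (by positivity) h1
    apply h2.congr'
    filter_upwards [eventually_ge_atTop 1] with n hn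
    have hK : (0 : ℝ) < (n : ℝ) := by exact_mod_cast hn
    have : ((n : ℝ)) ^ (p + 1) ≠ 0 := ne_of_gt (Real.rpow_pos_of_pos hK _)
    field_simp
  -- e is little-o of g
  have he_littleo : e =o[atTop] g := by
    have h1 : Tendsto (fun k : ℕ => (k : ℝ) ^ (a + b - 1) * S k - c) atTop (𝓝 0) := by
      simpa using hA.sub_const c
    have heq : ∀ᶠ k : ℕ in atTop, g k * ((k : ℝ) ^ (a + b - 1) * S k - c) = e k := by
      filter_upwards [eventually_ge_atTop 1] with k hk
      have hK : (0 : ℝ) < (k : ℝ) := by exact_mod_cast hk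
      have hone : g k * (k : ℝ) ^ (a + b - 1) = 1 := by
        simp only [hgdef]
        rw [← Real.rpow_add hK, show p + (a + b - 1) = 0 by simp [hpdef], Real.rpow_zero]
      have hk1 : k ≠ 0 := by omega
      simp only [hedef, if_neg hk1]
      calc g k * ((k : ℝ) ^ (a + b - 1) * S k - c)
          = (g k * (k : ℝ) ^ (a + b - 1)) * S k - c * g k := by ring
        _ = S k - c * g k := by rw [hone, one_mul]
    have h2 := (Asymptotics.isBigO_refl g atTop).mul_isLittleO ((Asymptotics.isLittleO_one_iff ℝ).2 h1)
    have h4 : (fun x : ℕ => g x * 1) =O[atTop] g := by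
      apply Asymptotics.isBigO_of_le
      intro x
      simp
    exact (h2.congr' heq (Filter.EventuallyEq.refl _ _)).trans_isBigO h4
  have hesum := he_littleo.sum_range hg_nonneg hgsum_top
  -- error term divided by n^(p+1) tends to 0
  have herr : Tendsto (fun n : ℕ => (∑ k ∈ Finset.range n, e k) / (n : ℝ) ^ (p + 1))
      atTop (𝓝 0) := by
    have h2 : Tendsto (fun n : ℕ => (∑ k ∈ Finset.range n, e k) /
        (∑ k ∈ Finset.range n, g k)) atTop (𝓝 0) := hesum.tendsto_div_nhds_zero
    have h3 := h2.mul hB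
    rw [zero_mul] at h3
    apply h3.congr'
    filter_upwards [hgsum_top.eventually_gt_atTop 0] with n hn
    have : (∑ k ∈ Finset.range n, g k) ≠ 0 := ne_of_gt hn
    field_simp
  -- conclusion
  have h4 := herr.add (hB.const_mul c)
  rw [zero_add] at h4
  have h5 : (2 : ℝ) - (a + b) = p + 1 := by simp [hpdef]; ring
  rw [show (nhds ((∫ x in Ioi (0:ℝ), x ^ (-a) * (x + 1) ^ (-b)) / (2 - (a + b))))
      = 𝓝 (c * (1 / (p + 1))) by rw [← hcdef, h5]; congr 1; field_simp]
  apply h4.congr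
  intro n
  rw [h5, hsum_eq n, add_div, mul_div_assoc]
end

section
/- Let a, b be reals with 1/2 < a < 1 and 1/2 < b < 1. Then Σ_{k=1}^{n−1} k·S(k) ~ [c(a,b)/(3−(a+b))] · n^(3−(a+b)) as n → ∞, where S(k) := Σ_{j=0}^∞ (j+1)^(−a)(j+k+1)^(−b) and c(a,b) := ∫₀^∞ x^(−a)(x+1)^(−b) dx. -/
open MeasureTheory Set Filter Topology

-- integrability of the integrand
lemma gg_integrable {a b : ℝ} (ha0 : 0 < a) (ha1 : a < 1) (hb0 : 0 ≤ b) (hab : 1 < a + b) :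
    IntegrableOn (fun x : ℝ => x ^ (-a) * (x + 1) ^ (-b)) (Ioi (0:ℝ)) := by
  have hmeas : Measurable (fun x : ℝ => x ^ (-a) * (x + 1) ^ (-b)) := by
    fun_prop
  have h1 : IntegrableOn (fun x : ℝ => x ^ (-a) * (x + 1) ^ (-b)) (Ioc (0:ℝ) 1) := by
    have hint : IntegrableOn (fun x : ℝ => x ^ (-a)) (Ioc (0:ℝ) 1) := by
      have := intervalIntegral.intervalIntegrable_rpow' (a := 0) (b := 1) (r := -a) (by linarith)
      rwa [intervalIntegrable_iff_integrableOn_Ioc_of_le (by norm_num)] at this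
    refine Integrable.mono' hint (hmeas.aestronglyMeasurable.restrict) ?_
    filter_upwards [ae_restrict_mem measurableSet_Ioc] with x hx
    have hx0 : 0 < x := hx.1
    rw [Real.norm_eq_abs, abs_of_nonneg (by positivity)]
    calc x ^ (-a) * (x + 1) ^ (-b) ≤ x ^ (-a) * 1 :=
          mul_le_mul_of_nonneg_left
            (Real.rpow_le_one_of_one_le_of_nonpos (by linarith) (by linarith))
            (Real.rpow_nonneg hx0.le _)
      _ = x ^ (-a) := mul_one _
  have h2 : IntegrableOn (fun x : ℝ => x ^ (-a) * (x + 1) ^ (-b)) (Ioi (1:ℝ)) := by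
    have hint : IntegrableOn (fun x : ℝ => x ^ (-(a+b))) (Ioi (1:ℝ)) :=
      integrableOn_Ioi_rpow_of_lt (by linarith) one_pos
    refine Integrable.mono' hint (hmeas.aestronglyMeasurable.restrict) ?_
    filter_upwards [ae_restrict_mem measurableSet_Ioi] with x hx
    have hx0 : (0:ℝ) < x := lt_trans one_pos hx
    rw [Real.norm_eq_abs, abs_of_nonneg (by positivity)]
    calc x ^ (-a) * (x + 1) ^ (-b) ≤ x ^ (-a) * x ^ (-b) :=
          mul_le_mul_of_nonneg_left
            (Real.rpow_le_rpow_of_nonpos hx0 (by linarith) (by linarith))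
            (Real.rpow_nonneg hx0.le _)
      _ = x ^ (-(a+b)) := by rw [← Real.rpow_add hx0]; ring_nf
  have : Ioc (0:ℝ) 1 ∪ Ioi 1 = Ioi 0 := Ioc_union_Ioi_eq_Ioi zero_le_one
  rw [← this]
  exact h1.union h2

lemma gg_anti {a b : ℝ} (ha0 : 0 < a) (hb0 : 0 ≤ b) {x y : ℝ} (hx : 0 < x) (hxy : x ≤ y) :
    y ^ (-a) * (y + 1) ^ (-b) ≤ x ^ (-a) * (x + 1) ^ (-b) := by
  have hy : 0 < y := lt_of_lt_of_le hx hxy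
  have h1 : y ^ (-a) ≤ x ^ (-a) := Real.rpow_le_rpow_of_nonpos hx hxy (by linarith)
  have h2 : (y + 1) ^ (-b) ≤ (x + 1) ^ (-b) :=
    Real.rpow_le_rpow_of_nonpos (by linarith) (by linarith) (by linarith)
  exact mul_le_mul h1 h2 (Real.rpow_nonneg (by linarith) _) (Real.rpow_nonneg hx.le _)

lemma gg_nonneg {a b : ℝ} {x : ℝ} (hx : 0 ≤ x) : 0 ≤ x ^ (-a) * (x + 1) ^ (-b) :=
  mul_nonneg (Real.rpow_nonneg hx _) (Real.rpow_nonneg (by linarith) _)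

lemma key_riemann {a b : ℝ} (ha0 : 0 < a) (ha1 : a < 1) (hb0 : 0 ≤ b) (hab : 1 < a + b) :
    Tendsto (fun k : ℕ => (k:ℝ) ^ (a + b - 1) *
        ∑' j : ℕ, ((j:ℝ) + 1) ^ (-a) * ((j:ℝ) + (k:ℝ) + 1) ^ (-b)) atTop
      (𝓝 (∫ x in Ioi (0:ℝ), x ^ (-a) * (x + 1) ^ (-b))) := by
  set g : ℝ → ℝ := fun x => x ^ (-a) * (x + 1) ^ (-b) with hgdef
  set c : ℝ := ∫ x in Ioi (0:ℝ), g x with hcdef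
  have hgint : IntegrableOn g (Ioi (0:ℝ)) := gg_integrable ha0 ha1 hb0 hab
  have hcnn : 0 ≤ c := setIntegral_nonneg measurableSet_Ioi fun x hx => gg_nonneg (le_of_lt hx)
  set D : ℕ → ℝ := fun k => ((k:ℝ))⁻¹ ^ (1 - a) with hDdef
  have hDten : Tendsto D atTop (𝓝 0) := by
    have h1 := (tendsto_rpow_neg_atTop (by linarith : (0:ℝ) < 1 - a)).comp
      (tendsto_natCast_atTop_atTop (R := ℝ))
    apply h1.congr
    intro k
    simp only [Function.comp, hDdef]
    rw [Real.inv_rpow (Nat.cast_nonneg k), ← Real.rpow_neg (Nat.cast_nonneg k)]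
  -- bounds for k ≥ 1
  have hbound : ∀ k : ℕ, 1 ≤ k →
      c - D k * (1 - a)⁻¹ ≤ (k:ℝ) ^ (a + b - 1) *
        ∑' j : ℕ, ((j:ℝ) + 1) ^ (-a) * ((j:ℝ) + (k:ℝ) + 1) ^ (-b) ∧
      (k:ℝ) ^ (a + b - 1) *
        ∑' j : ℕ, ((j:ℝ) + 1) ^ (-a) * ((j:ℝ) + (k:ℝ) + 1) ^ (-b) ≤ c + D k := by
    intro k hk1
    have hkr : (0:ℝ) < (k:ℝ) := by exact_mod_cast Nat.pos_of_ne_zero (by omega)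
    set kr : ℝ := (k:ℝ) with hkrdef
    set f : ℝ → ℝ := fun x => g (x / kr) with hfdef
    set h : ℕ → ℝ := fun j => g (((j:ℝ) + 1) / kr) with hhdef
    have hεpos : (0:ℝ) < kr⁻¹ := inv_pos.mpr hkr
    -- per-term identity
    have hterm : ∀ j : ℕ, (1 / kr) * h j
        = kr ^ (a + b - 1) * (((j:ℝ) + 1) ^ (-a) * ((j:ℝ) + kr + 1) ^ (-b)) := by
      intro j
      have hj1 : (0:ℝ) < (j:ℝ) + 1 := by positivity
      have hj2 : (0:ℝ) < (j:ℝ) + kr + 1 := by positivity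
      have e2 : ((j:ℝ) + 1) / kr + 1 = ((j:ℝ) + kr + 1) / kr := by
        field_simp
        ring
      have eA : (((j:ℝ) + 1) / kr) ^ (-a) = ((j:ℝ) + 1) ^ (-a) * kr ^ a := by
        rw [Real.div_rpow hj1.le hkr.le, Real.rpow_neg hkr.le, div_eq_mul_inv, inv_inv]
      have eB : (((j:ℝ) + kr + 1) / kr) ^ (-b) = ((j:ℝ) + kr + 1) ^ (-b) * kr ^ b := by
        rw [Real.div_rpow hj2.le hkr.le, Real.rpow_neg hkr.le, div_eq_mul_inv, inv_inv]
      have hkk : kr ^ a * kr ^ b / kr = kr ^ (a + b - 1) := by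
        rw [← Real.rpow_add hkr, Real.rpow_sub hkr, Real.rpow_one]
      simp only [hhdef, hgdef, e2, eA, eB]
      calc (1 / kr) * (((j:ℝ) + 1) ^ (-a) * kr ^ a * (((j:ℝ) + kr + 1) ^ (-b) * kr ^ b))
          = (((j:ℝ) + 1) ^ (-a) * ((j:ℝ) + kr + 1) ^ (-b)) * (kr ^ a * kr ^ b / kr) := by
            ring
        _ = kr ^ (a + b - 1) * (((j:ℝ) + 1) ^ (-a) * ((j:ℝ) + kr + 1) ^ (-b)) := by
            rw [hkk]; ring
    have hhnn : ∀ j : ℕ, 0 ≤ h j := fun j => gg_nonneg (by positivity)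
    -- antitone of f on [1, 1+N]
    have hfant : ∀ N : ℕ, AntitoneOn f (Icc (1:ℝ) (1 + (N:ℝ))) := by
      intro N x hx y hy hxy
      have hx0 : 0 < x / kr := div_pos (lt_of_lt_of_le one_pos hx.1) hkr
      exact gg_anti ha0 hb0 hx0 (by gcongr)
    -- interval integral computation
    have hI : ∀ N : ℕ, (∫ x in (1:ℝ)..(1 + (N:ℝ)), f x)
        = kr * ∫ x in (kr⁻¹)..((1 + (N:ℝ)) / kr), g x := by
      intro N
      rw [hfdef]
      rw [intervalIntegral.integral_comp_div (a := 1) (b := 1 + (N:ℝ)) (f := g) hkr.ne']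
      rw [smul_eq_mul, one_div]
    have hIleC : ∀ N : ℕ, (∫ x in (kr⁻¹)..((1 + (N:ℝ)) / kr), g x) ≤ c := by
      intro N
      have hle : kr⁻¹ ≤ (1 + (N:ℝ)) / kr := by
        rw [inv_eq_one_div, div_le_div_iff₀ hkr hkr]
        have : (0:ℝ) ≤ (N:ℝ) := Nat.cast_nonneg N
        nlinarith
      rw [intervalIntegral.integral_of_le hle]
      apply setIntegral_mono_set hgint
      · filter_upwards [ae_restrict_mem measurableSet_Ioi] with x hx
        exact gg_nonneg (le_of_lt hx)
      · exact HasSubset.Subset.eventuallyLE (fun x hx => lt_trans hεpos hx.1)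
    -- upper bound for partial sums
    have hsumub : ∀ M : ℕ, (∑ j ∈ Finset.range M, h j) ≤ h 0 + kr * c := by
      intro M
      cases M with
      | zero => simpa using add_nonneg (hhnn 0) (mul_nonneg hkr.le hcnn)
      | succ N =>
        rw [Finset.sum_range_succ']
        have e : ∀ i : ℕ, h (i + 1) = f (1 + ((i:ℕ) + 1 : ℕ)) := by
          intro i
          simp only [hhdef, hfdef]
          push_cast
          ring_nf
        calc (∑ i ∈ Finset.range N, h (i + 1)) + h 0
            = (∑ i ∈ Finset.range N, f (1 + ((i:ℕ) + 1 : ℕ))) + h 0 := by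
              rw [Finset.sum_congr rfl fun i _ => e i]
          _ ≤ (∫ x in (1:ℝ)..(1 + (N:ℝ)), f x) + h 0 := by
              gcongr
              exact (hfant N).sum_le_integral
          _ ≤ kr * c + h 0 := by
              gcongr
              rw [hI N]
              exact mul_le_mul_of_nonneg_left (hIleC N) hkr.le
          _ = h 0 + kr * c := by ring
    have hsummable : Summable h := summable_of_sum_range_le hhnn hsumub
    have htsumub : (∑' j, h j) ≤ h 0 + kr * c := Real.tsum_le_of_sum_range_le hhnn hsumub
    -- lower bound
    have hsumlb : ∀ N : ℕ, kr * (∫ x in (kr⁻¹)..((1 + (N:ℝ)) / kr), g x) ≤ ∑' j, h j := by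
      intro N
      have e : ∀ i : ℕ, f (1 + (i:ℝ)) = h i := by
        intro i
        simp only [hhdef, hfdef]
        ring_nf
      calc kr * (∫ x in (kr⁻¹)..((1 + (N:ℝ)) / kr), g x)
          = ∫ x in (1:ℝ)..(1 + (N:ℝ)), f x := (hI N).symm
        _ ≤ ∑ i ∈ Finset.range N, f (1 + (i:ℝ)) := (hfant N).integral_le_sum
        _ = ∑ i ∈ Finset.range N, h i := Finset.sum_congr rfl fun i _ => e i
        _ ≤ ∑' j, h j := hsummable.sum_le_tsum _ (fun i _ => hhnn i)
    have hIoiint : IntegrableOn g (Ioi (kr⁻¹)) := hgint.mono_set (Ioi_subset_Ioi hεpos.le)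
    have hNten : Tendsto (fun N : ℕ => (1 + (N:ℝ)) / kr) atTop atTop := by
      apply Tendsto.atTop_div_const hkr
      exact tendsto_atTop_add_const_left atTop 1 (tendsto_natCast_atTop_atTop (R := ℝ))
    have hIten := intervalIntegral_tendsto_integral_Ioi (a := kr⁻¹) hIoiint hNten
    have hlow : kr * (∫ x in Ioi (kr⁻¹), g x) ≤ ∑' j, h j :=
      le_of_tendsto ((hIten.const_mul kr)) (Eventually.of_forall hsumlb)
    -- split integral
    have hsplit : (∫ x in Ioc (0:ℝ) (kr⁻¹), g x) + (∫ x in Ioi (kr⁻¹), g x) = c := by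
      rw [← setIntegral_union (Ioc_disjoint_Ioi le_rfl) measurableSet_Ioi
        (hgint.mono_set (fun x hx => hx.1)) hIoiint,
        Ioc_union_Ioi_eq_Ioi hεpos.le]
    -- small integral bound
    have hsmall : (∫ x in Ioc (0:ℝ) (kr⁻¹), g x) ≤ D k * (1 - a)⁻¹ := by
      have hint2 : IntegrableOn (fun x : ℝ => x ^ (-a)) (Ioc (0:ℝ) (kr⁻¹)) := by
        have := intervalIntegral.intervalIntegrable_rpow' (a := 0) (b := kr⁻¹) (r := -a)
          (by linarith)
        rwa [intervalIntegrable_iff_integrableOn_Ioc_of_le hεpos.le] at this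
      calc (∫ x in Ioc (0:ℝ) (kr⁻¹), g x) ≤ ∫ x in Ioc (0:ℝ) (kr⁻¹), x ^ (-a) := by
            apply setIntegral_mono_on (hgint.mono_set (fun x hx => hx.1)) hint2
              measurableSet_Ioc
            intro x hx
            calc g x ≤ x ^ (-a) * 1 := by
                  apply mul_le_mul_of_nonneg_left _ (Real.rpow_nonneg hx.1.le _)
                  exact Real.rpow_le_one_of_one_le_of_nonpos (by linarith [hx.1]) (by linarith)
              _ = x ^ (-a) := mul_one _
        _ = D k * (1 - a)⁻¹ := by
            rw [← intervalIntegral.integral_of_le hεpos.le,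
              integral_rpow (Or.inl (by linarith)),
              Real.zero_rpow (by intro hcon; linarith [hcon] : -a + 1 ≠ 0)]
            simp only [hDdef]
            rw [show -a + 1 = 1 - a by ring]
            rw [div_eq_mul_inv, sub_zero]
    -- upper bound on h 0 term
    have hh0 : (1 / kr) * h 0 ≤ D k := by
      have h00 : h 0 = (kr⁻¹) ^ (-a) * (kr⁻¹ + 1) ^ (-b) := by
        simp only [hhdef, hgdef, Nat.cast_zero, zero_add, one_div]
      rw [h00]
      calc (1 / kr) * ((kr⁻¹) ^ (-a) * (kr⁻¹ + 1) ^ (-b))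
          ≤ (1 / kr) * ((kr⁻¹) ^ (-a) * 1) := by
            apply mul_le_mul_of_nonneg_left _ (by positivity)
            apply mul_le_mul_of_nonneg_left _ (Real.rpow_nonneg hεpos.le _)
            exact Real.rpow_le_one_of_one_le_of_nonpos (by linarith) (by linarith)
        _ = (kr⁻¹) ^ (1:ℝ) * (kr⁻¹) ^ (-a) := by
            rw [Real.rpow_one, one_div, mul_one]
        _ = D k := by
            rw [← Real.rpow_add hεpos, show (1:ℝ) + -a = 1 - a by ring]
    -- combine: express the target via tsum h
    have hFk : kr ^ (a + b - 1) * (∑' j : ℕ, ((j:ℝ) + 1) ^ (-a) * ((j:ℝ) + kr + 1) ^ (-b))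
        = (1 / kr) * ∑' j, h j := by
      rw [← tsum_mul_left, ← tsum_mul_left]
      exact tsum_congr fun j => (hterm j).symm
    constructor
    · rw [hFk]
      have h1 : c - D k * (1 - a)⁻¹ ≤ ∫ x in Ioi (kr⁻¹), g x := by
        have := hsmall
        linarith [hsplit]
      calc c - D k * (1 - a)⁻¹ ≤ ∫ x in Ioi (kr⁻¹), g x := h1
        _ = (1 / kr) * (kr * (∫ x in Ioi (kr⁻¹), g x)) := by
            field_simp
        _ ≤ (1 / kr) * (∑' j, h j) := by
            apply mul_le_mul_of_nonneg_left hlow (by positivity)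
    · rw [hFk]
      calc (1 / kr) * (∑' j, h j) ≤ (1 / kr) * (h 0 + kr * c) :=
            mul_le_mul_of_nonneg_left htsumub (by positivity)
        _ = (1 / kr) * h 0 + c := by field_simp
        _ ≤ D k + c := by gcongr
        _ = c + D k := by ring
  -- squeeze
  apply tendsto_of_tendsto_of_tendsto_of_le_of_le'
    (g := fun k : ℕ => c - D k * (1 - a)⁻¹) (h := fun k : ℕ => c + D k)
  · have := (hDten.mul_const (1 - a)⁻¹)
    simpa using tendsto_const_nhds.sub this
  · simpa using tendsto_const_nhds.add hDten
  · filter_upwards [eventually_ge_atTop 1] with k hk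
    exact (hbound k hk).1
  · filter_upwards [eventually_ge_atTop 1] with k hk
    exact (hbound k hk).2

lemma sum_rpow_asymp {p : ℝ} (hp : 0 < p) :
    Tendsto (fun n : ℕ => (∑ k ∈ Finset.range n, (k:ℝ) ^ p) / (n:ℝ) ^ (p + 1)) atTop
      (𝓝 (1 / (p + 1))) := by
  set v : ℕ → ℝ := fun n => ∑ k ∈ Finset.range n, (k:ℝ) ^ p with hvdef
  have hmono : ∀ n : ℕ, MonotoneOn (fun x : ℝ => x ^ p) (Icc (0:ℝ) (0 + (n:ℝ))) := by
    intro n x hx y _ hxy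
    exact Real.rpow_le_rpow hx.1 hxy hp.le
  have hIval : ∀ n : ℕ, (∫ x in (0:ℝ)..(0 + (n:ℝ)), x ^ p) = (n:ℝ) ^ (p + 1) / (p + 1) := by
    intro n
    rw [zero_add, integral_rpow (Or.inl (by linarith))]
    rw [Real.zero_rpow (by positivity : p + 1 ≠ 0), sub_zero]
  have hub : ∀ n : ℕ, v n ≤ (n:ℝ) ^ (p + 1) / (p + 1) := by
    intro n
    have := (hmono n).sum_le_integral
    rw [hIval n] at this
    refine le_trans (le_of_eq ?_) this
    exact Finset.sum_congr rfl fun i _ => by rw [zero_add]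
  have hlb : ∀ n : ℕ, (n:ℝ) ^ (p + 1) / (p + 1) ≤ v n + (n:ℝ) ^ p := by
    intro n
    have := (hmono n).integral_le_sum
    rw [hIval n] at this
    refine le_trans this (le_of_eq ?_)
    have e1 : ∀ i : ℕ, (fun x : ℝ => x ^ p) ((0:ℝ) + ((i:ℕ) + 1 : ℕ)) = ((i:ℝ) + 1) ^ p := by
      intro i; push_cast; rw [zero_add]
    rw [Finset.sum_congr rfl fun i _ => e1 i]
    have e2 : v (n + 1) = (∑ i ∈ Finset.range n, ((i:ℝ) + 1) ^ p) + (0:ℝ) ^ p := by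
      show (∑ k ∈ Finset.range (n + 1), (k:ℝ) ^ p) = _
      rw [Finset.sum_range_succ' (fun k => (k:ℝ) ^ p) n]
      push_cast
      ring_nf
    have e3 : v (n + 1) = v n + (n:ℝ) ^ p := by
      show (∑ k ∈ Finset.range (n + 1), (k:ℝ) ^ p) = _
      exact Finset.sum_range_succ _ n
    rw [Real.zero_rpow hp.ne'] at e2
    rw [add_zero] at e2
    rw [← e2, e3]
  -- squeeze
  have hinv : Tendsto (fun n : ℕ => ((n:ℝ))⁻¹) atTop (𝓝 0) :=
    tendsto_inv_atTop_zero.comp tendsto_natCast_atTop_atTop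
  apply tendsto_of_tendsto_of_tendsto_of_le_of_le'
    (g := fun n : ℕ => 1 / (p + 1) - ((n:ℝ))⁻¹) (h := fun _ : ℕ => 1 / (p + 1))
  · simpa using tendsto_const_nhds.sub hinv
  · exact tendsto_const_nhds
  · filter_upwards [eventually_ge_atTop 1] with n hn
    have hn0 : (0:ℝ) < (n:ℝ) := by exact_mod_cast Nat.pos_of_ne_zero (by omega)
    have hX : (0:ℝ) < (n:ℝ) ^ (p + 1) := Real.rpow_pos_of_pos hn0 _
    have hXe : (n:ℝ) ^ (p + 1) = (n:ℝ) ^ p * (n:ℝ) := by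
      rw [Real.rpow_add_one hn0.ne']
    rw [sub_le_iff_le_add]
    have hnp : ((n:ℝ) ^ p) ≠ 0 := (Real.rpow_pos_of_pos hn0 p).ne'
    have h1 : ((n:ℝ) ^ (p + 1) / (p + 1)) / (n:ℝ) ^ (p + 1)
        ≤ (v n + (n:ℝ) ^ p) / (n:ℝ) ^ (p + 1) := by
      gcongr
      exact hlb n
    have h2 : ((n:ℝ) ^ (p + 1) / (p + 1)) / (n:ℝ) ^ (p + 1) = 1 / (p + 1) := by
      field_simp
    have h3 : (v n + (n:ℝ) ^ p) / (n:ℝ) ^ (p + 1) = v n / (n:ℝ) ^ (p + 1) + ((n:ℝ))⁻¹ := by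
      rw [add_div, hXe, div_mul_cancel_left₀ hnp]
    rw [h2, h3] at h1
    exact h1
  · filter_upwards [eventually_ge_atTop 1] with n hn
    have hn0 : (0:ℝ) < (n:ℝ) := by exact_mod_cast Nat.pos_of_ne_zero (by omega)
    have hX : (0:ℝ) < (n:ℝ) ^ (p + 1) := Real.rpow_pos_of_pos hn0 _
    rw [div_le_div_iff₀ hX (by positivity), one_mul] at *
    calc v n * (p + 1) ≤ ((n:ℝ) ^ (p + 1) / (p + 1)) * (p + 1) := by
          have := hub n
          nlinarith [hX]
      _ = (n:ℝ) ^ (p + 1) := by field_simp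

lemma cesaro_rpow {u : ℕ → ℝ} {c p : ℝ} (hp : 0 < p)
    (h : Tendsto (fun k : ℕ => u k / (k:ℝ) ^ p) atTop (𝓝 c)) :
    Tendsto (fun n : ℕ => (∑ k ∈ Finset.range n, u k) / (n:ℝ) ^ (p + 1)) atTop
      (𝓝 (c / (p + 1))) := by
  set v : ℕ → ℝ := fun n => ∑ k ∈ Finset.range n, (k:ℝ) ^ p with hvdef
  have hvten : Tendsto (fun n : ℕ => v n / (n:ℝ) ^ (p + 1)) atTop (𝓝 (1 / (p + 1))) :=
    sum_rpow_asymp hp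
  have hXtop : Tendsto (fun n : ℕ => (n:ℝ) ^ (p + 1)) atTop atTop :=
    (tendsto_rpow_atTop (by linarith)).comp tendsto_natCast_atTop_atTop
  have hvtop : Tendsto v atTop atTop := by
    have h1 : Tendsto (fun n : ℕ => (v n / (n:ℝ) ^ (p + 1)) * (n:ℝ) ^ (p + 1)) atTop atTop :=
      hvten.pos_mul_atTop (by positivity) hXtop
    apply h1.congr'
    filter_upwards [eventually_ge_atTop 1] with n hn
    have hn0 : (0:ℝ) < (n:ℝ) := by exact_mod_cast Nat.pos_of_ne_zero (by omega)
    rw [div_mul_cancel₀ _ (Real.rpow_pos_of_pos hn0 _).ne']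
  set w : ℕ → ℝ := fun k => u k - c * (k:ℝ) ^ p with hwdef
  have hw : w =o[atTop] fun k : ℕ => (k:ℝ) ^ p := by
    rw [Asymptotics.isLittleO_iff_tendsto']
    · have h2 : Tendsto (fun k : ℕ => u k / (k:ℝ) ^ p - c) atTop (𝓝 0) := by
        simpa using h.sub_const c
      apply Tendsto.congr' _ h2
      filter_upwards [eventually_ge_atTop 1] with k hk
      have hk0 : (0:ℝ) < (k:ℝ) := by exact_mod_cast Nat.pos_of_ne_zero (by omega)
      have hkp : ((k:ℝ) ^ p) ≠ 0 := (Real.rpow_pos_of_pos hk0 _).ne'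
      rw [hwdef]
      field_simp
    · filter_upwards [eventually_ge_atTop 1] with k hk hk0
      have hkpos : (0:ℝ) < (k:ℝ) := by exact_mod_cast Nat.pos_of_ne_zero (by omega)
      exact absurd hk0 (Real.rpow_pos_of_pos hkpos _).ne'
  have hsw : (fun n => ∑ i ∈ Finset.range n, w i) =o[atTop] fun n => v n :=
    hw.sum_range (fun i => Real.rpow_nonneg (Nat.cast_nonneg i) _) hvtop
  have hswv : Tendsto (fun n => (∑ i ∈ Finset.range n, w i) / v n) atTop (𝓝 0) :=
    hsw.tendsto_div_nhds_zero
  have hvpos : ∀ n : ℕ, 2 ≤ n → 0 < v n := by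
    intro n hn
    have h1 : (1:ℝ) ^ p ≤ v n := by
      have : ((1:ℕ):ℝ) ^ p ≤ v n :=
        Finset.single_le_sum (f := fun k : ℕ => (k:ℝ) ^ p)
          (fun i _ => Real.rpow_nonneg (Nat.cast_nonneg i) _)
          (Finset.mem_range.mpr (by omega))
      simpa using this
    rw [Real.one_rpow] at h1
    linarith
  have htz : Tendsto (fun n : ℕ => (∑ i ∈ Finset.range n, w i) / (n:ℝ) ^ (p + 1)) atTop
      (𝓝 0) := by
    have h1 : Tendsto
        (fun n : ℕ => ((∑ i ∈ Finset.range n, w i) / v n) * (v n / (n:ℝ) ^ (p + 1))) atTop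
        (𝓝 (0 * (1 / (p + 1)))) := hswv.mul hvten
    rw [zero_mul] at h1
    apply h1.congr'
    filter_upwards [eventually_ge_atTop 2] with n hn
    have hn0 : (0:ℝ) < (n:ℝ) := by exact_mod_cast Nat.pos_of_ne_zero (by omega)
    have hX : ((n:ℝ) ^ (p + 1)) ≠ 0 := (Real.rpow_pos_of_pos hn0 _).ne'
    have hv0 : v n ≠ 0 := (hvpos n hn).ne'
    field_simp
  have hdecomp : ∀ n : ℕ, (∑ k ∈ Finset.range n, u k)
      = (∑ i ∈ Finset.range n, w i) + c * v n := by
    intro n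
    rw [hvdef, hwdef, Finset.mul_sum, ← Finset.sum_add_distrib]
    exact Finset.sum_congr rfl fun k _ => by ring
  have hfin : Tendsto (fun n : ℕ =>
      (∑ i ∈ Finset.range n, w i) / (n:ℝ) ^ (p + 1) + c * (v n / (n:ℝ) ^ (p + 1))) atTop
      (𝓝 (0 + c * (1 / (p + 1)))) := htz.add (hvten.const_mul c)
  have : (0:ℝ) + c * (1 / (p + 1)) = c / (p + 1) := by ring
  rw [this] at hfin
  apply hfin.congr
  intro n
  rw [hdecomp n, add_div, mul_div_assoc]


theorem stmt_9 (a b : ℝ) (ha : 1/2 < a) (ha1 : a < 1) (hb : 1/2 < b) (hb1 : b < 1) :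
    Tendsto
      (fun n : ℕ =>
        (∑ k ∈ Finset.Ico 1 n,
            (k : ℝ) *
              ∑' j : ℕ, ((j : ℝ) + 1) ^ (-a) * ((j : ℝ) + (k : ℝ) + 1) ^ (-b)) /
          (n : ℝ) ^ (3 - (a + b)))
      atTop
      (nhds ((∫ x in Ioi (0:ℝ), x ^ (-a) * (x + 1) ^ (-b)) / (3 - (a + b)))) := by
  have ha0 : 0 < a := by linarith
  have hb0 : (0:ℝ) ≤ b := by linarith
  have hab : 1 < a + b := by linarith
  have hkey := key_riemann ha0 ha1 hb0 hab
  set S : ℕ → ℝ := fun k => ∑' j : ℕ, ((j : ℝ) + 1) ^ (-a) * ((j : ℝ) + (k : ℝ) + 1) ^ (-b)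
    with hSdef
  have hu : Tendsto (fun k : ℕ => ((k:ℝ) * S k) / (k:ℝ) ^ (2 - (a + b))) atTop
      (𝓝 (∫ x in Ioi (0:ℝ), x ^ (-a) * (x + 1) ^ (-b))) := by
    apply hkey.congr'
    filter_upwards [eventually_ge_atTop 1] with k hk
    have hk0 : (0:ℝ) < (k:ℝ) := by exact_mod_cast Nat.pos_of_ne_zero (by omega)
    have e1 : (k:ℝ) / (k:ℝ) ^ (2 - (a + b)) = (k:ℝ) ^ (a + b - 1) := by
      have h2 := Real.rpow_sub hk0 1 (2 - (a + b))
      rw [Real.rpow_one] at h2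
      rw [show a + b - 1 = 1 - (2 - (a + b)) by ring, h2]
    rw [mul_div_right_comm, e1]
  have hces := cesaro_rpow (by linarith : (0:ℝ) < 2 - (a + b)) hu
  rw [show 2 - (a + b) + 1 = 3 - (a + b) by ring] at hces
  apply hces.congr'
  filter_upwards [eventually_ge_atTop 1] with n hn
  congr 1
  rw [Finset.range_eq_Ico, Finset.sum_eq_sum_Ico_succ_bot (by omega : 0 < n)]
  simp
  rfl
end

section
/- For a real d with 1/2 < d < 1, lim_{n→∞} n^(−(3−2d)) Σ_{j=1}^∞ (Σ_{k=1}^n (k+j)^(−d))² = ∫₀^∞ (∫₀^1 (s+u)^(−d) ds)² du, and this double integral is finite. -/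
open MeasureTheory Set Filter

noncomputable def Faux (d u : ℝ) : ℝ := ((u + 1) ^ (1 - d) - u ^ (1 - d)) / (1 - d)

lemma aux_intable {d : ℝ} (hd1 : d < 1) (u : ℝ) :
    IntervalIntegrable (fun s => (s + u) ^ (-d)) volume 0 1 := by
  have h := (intervalIntegral.intervalIntegrable_rpow' (a := u) (b := 1 + u) (r := -d)
    (by linarith)).comp_add_right u
  simpa using h

lemma hF_eq {d : ℝ} (hd1 : d < 1) (u : ℝ) :
    (∫ s in (0:ℝ)..1, (s + u) ^ (-d)) = Faux d u := by
  have h := intervalIntegral.integral_comp_add_right (a := (0:ℝ)) (b := 1)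
    (fun x => x ^ (-d)) u
  rw [h, integral_rpow (Or.inl (by linarith))]
  have h2 : -d + 1 = 1 - d := by ring
  rw [h2, Faux, zero_add, add_comm u 1]

lemma hF_nonneg {d : ℝ} (hd1 : d < 1) (u : ℝ) (hu : 0 ≤ u) : 0 ≤ Faux d u := by
  have h : u ^ (1 - d) ≤ (u + 1) ^ (1 - d) :=
    Real.rpow_le_rpow hu (by linarith) (by linarith)
  have h1 : (0:ℝ) < 1 - d := by linarith
  unfold Faux
  exact div_nonneg (sub_nonneg.2 h) h1.le

lemma hF_anti {d : ℝ} (hd0 : 0 < d) (hd1 : d < 1) {u v : ℝ} (hu : 0 < u) (huv : u ≤ v) :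
    Faux d v ≤ Faux d u := by
  rw [← hF_eq hd1, ← hF_eq hd1]
  refine intervalIntegral.integral_mono_on zero_le_one (aux_intable hd1 v)
    (aux_intable hd1 u) fun x hx => ?_
  exact Real.rpow_le_rpow_of_nonpos (by linarith [hx.1]) (by linarith) (by linarith)

lemma hF_le_C {d : ℝ} (hd0 : 0 < d) (hd1 : d < 1) (u : ℝ) (hu : 0 ≤ u) :
    Faux d u ≤ 1 / (1 - d) := by
  have h1 : (0:ℝ) < 1 - d := by linarith
  have key : (u + 1) ^ (1 - d) ≤ u ^ (1 - d) + 1 := by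
    have h := NNReal.rpow_add_le_add_rpow (Real.toNNReal u) 1 (le_of_lt h1) (by linarith)
    have h' := NNReal.coe_le_coe.2 h
    push_cast [NNReal.coe_rpow] at h'
    rw [Real.coe_toNNReal u hu] at h'
    simpa [Real.one_rpow] using h'
  rw [Faux, div_le_div_iff₀ h1 h1]
  nlinarith

lemma hF_le_rpow {d : ℝ} (hd0 : 0 < d) (hd1 : d < 1) {u : ℝ} (hu : 0 < u) :
    Faux d u ≤ u ^ (-d) := by
  rw [← hF_eq hd1]
  have h := intervalIntegral.integral_mono_on (a := (0:ℝ)) (b := 1) zero_le_one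
    (aux_intable hd1 u) (intervalIntegrable_const (c := u ^ (-d))) (fun x hx =>
      Real.rpow_le_rpow_of_nonpos hu (by linarith [hx.1]) (by linarith))
  simpa using h

lemma hF_cont {d : ℝ} (hd1 : d < 1) : Continuous (Faux d) := by
  have h1 : Continuous fun u : ℝ => u ^ (1 - d) :=
    continuous_iff_continuousAt.2 fun x =>
      Real.continuousAt_rpow_const x _ (Or.inr (by linarith))
  exact ((h1.comp (continuous_add_right 1)).sub h1).div_const _
lemma hsq {d : ℝ} {x : ℝ} (hx : 0 ≤ x) : (x ^ (-d)) ^ 2 = x ^ (-(2 * d)) := by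
  rw [← Real.rpow_natCast (x ^ (-d)) 2, ← Real.rpow_mul hx]
  norm_num
  ring_nf

lemma hg_int {d : ℝ} (hd : 1/2 < d) (hd1 : d < 1) :
    IntegrableOn (fun u => (Faux d u) ^ 2) (Ioi (0:ℝ)) volume := by
  have hd0 : (0:ℝ) < d := by linarith
  have hcont : Continuous fun u => (Faux d u) ^ 2 := (hF_cont hd1).pow 2
  rw [← Ioc_union_Ioi_eq_Ioi (zero_le_one' ℝ)]
  refine IntegrableOn.union ?_ ?_
  · exact hcont.integrableOn_Ioc
  · have hbase : IntegrableOn (fun x : ℝ => x ^ (-(2 * d))) (Ioi 1) volume :=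
      integrableOn_Ioi_rpow_of_lt (by linarith) one_pos
    refine Integrable.mono hbase (hcont.aestronglyMeasurable.restrict) ?_
    rw [ae_restrict_iff' measurableSet_Ioi]
    filter_upwards with x hx
    have hx0 : (0:ℝ) < x := lt_trans one_pos hx
    have h1 : 0 ≤ Faux d x := hF_nonneg hd1 x hx0.le
    have h2 : Faux d x ≤ x ^ (-d) := hF_le_rpow hd0 hd1 hx0
    rw [Real.norm_eq_abs, Real.norm_eq_abs, abs_of_nonneg (by positivity),
      abs_of_nonneg (Real.rpow_nonneg hx0.le _), ← hsq hx0.le]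
    exact pow_le_pow_left₀ h1 h2 2

lemma hIoc_decomp {c h : ℝ} (hc : 0 ≤ c) (hh : 0 < h) :
    Ioi c = ⋃ j : ℕ, Ioc (c + j * h) (c + (j + 1) * h) := by
  ext x
  simp only [mem_Ioi, mem_iUnion, mem_Ioc]
  constructor
  · intro hx
    have hy : 0 < (x - c) / h := div_pos (by linarith) hh
    set m := ⌈(x - c) / h⌉₊ with hm
    have hm1 : 1 ≤ m := Nat.one_le_ceil_iff.2 hy
    refine ⟨m - 1, ?_, ?_⟩
    · have : ((m - 1 : ℕ) : ℝ) < (x - c) / h := by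
        by_contra hcon
        push_neg at hcon
        have := Nat.ceil_le.2 hcon
        omega
      have h2 := (lt_div_iff₀ hh).1 this
      linarith
    · have hcast : ((m - 1 : ℕ) : ℝ) + 1 = (m : ℝ) := by
        push_cast [hm1]
        ring
      rw [hcast]
      have := Nat.le_ceil ((x - c) / h)
      have := (div_le_iff₀ hh).1 this
      linarith
  · rintro ⟨j, hj1, _⟩
    have : 0 ≤ (j : ℝ) * h := mul_nonneg (Nat.cast_nonneg j) hh.le
    linarith

lemma hHasSum_int {d : ℝ} (hd : 1/2 < d) (hd1 : d < 1) {c h : ℝ} (hc : 0 ≤ c) (hh : 0 < h) :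
    HasSum (fun j : ℕ => ∫ x in Ioc (c + j * h) (c + (j + 1) * h), (Faux d x) ^ 2)
      (∫ x in Ioi c, (Faux d x) ^ 2) := by
  have hsub : Ioi c ⊆ Ioi (0:ℝ) := Ioi_subset_Ioi hc
  have hint : IntegrableOn (fun u => (Faux d u) ^ 2) (Ioi c) volume :=
    (hg_int hd hd1).mono_set hsub
  rw [hIoc_decomp hc hh] at hint ⊢
  refine MeasureTheory.hasSum_integral_iUnion (fun j => measurableSet_Ioc) ?_ hint
  intro i j hij
  refine Ioc_disjoint_Ioc.2 ?_
  rcases hij.lt_or_gt with h1 | h1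
  · refine le_trans (min_le_left _ _) (le_trans ?_ (le_max_right _ _))
    have : (i:ℝ) + 1 ≤ j := by exact_mod_cast h1
    nlinarith
  · refine le_trans (min_le_right _ _) (le_trans ?_ (le_max_left _ _))
    have : (j:ℝ) + 1 ≤ i := by exact_mod_cast h1
    nlinarith

lemma hIoc_le {d : ℝ} (hd : 1/2 < d) (hd1 : d < 1) {a b M : ℝ} (ha : 0 ≤ a) (hab : a < b)
    (hM : ∀ x ∈ Ioc a b, (Faux d x) ^ 2 ≤ M) :
    (∫ x in Ioc a b, (Faux d x) ^ 2) ≤ (b - a) * M := by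
  have hint : IntegrableOn (fun u => (Faux d u) ^ 2) (Ioc a b) volume :=
    (hg_int hd hd1).mono_set (fun x hx => lt_of_le_of_lt ha hx.1)
  have := MeasureTheory.setIntegral_mono_on hint (integrableOn_const (by
    simp [Real.volume_Ioc, ENNReal.ofReal_lt_top])) measurableSet_Ioc hM
  rwa [MeasureTheory.setIntegral_const, Real.volume_real_Ioc_of_le (by linarith),
    smul_eq_mul] at this

lemma hIoc_ge {d : ℝ} (hd : 1/2 < d) (hd1 : d < 1) {a b M : ℝ} (ha : 0 ≤ a) (hab : a < b)
    (hM : ∀ x ∈ Ioc a b, M ≤ (Faux d x) ^ 2) :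
    (b - a) * M ≤ ∫ x in Ioc a b, (Faux d x) ^ 2 := by
  have hint : IntegrableOn (fun u => (Faux d u) ^ 2) (Ioc a b) volume :=
    (hg_int hd hd1).mono_set (fun x hx => lt_of_le_of_lt ha hx.1)
  have := MeasureTheory.setIntegral_mono_on (integrableOn_const (by
    simp [Real.volume_Ioc, ENNReal.ofReal_lt_top])) hint measurableSet_Ioc hM
  rwa [MeasureTheory.setIntegral_const, Real.volume_real_Ioc_of_le (by linarith),
    smul_eq_mul] at this
lemma hI_eq {d : ℝ} (hd1 : d < 1) (n : ℕ) (hn : 1 ≤ n) {c : ℝ} (hc : 0 < c) :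
    (∫ x in (0:ℝ)..(0 + (n:ℝ)), (x + c) ^ (-d)) = (n:ℝ) ^ (1-d) * Faux d (c / n) := by
  have hn0 : (0:ℝ) < n := by exact_mod_cast hn
  have e1 : (n:ℝ) ^ (1-d) * (c / n + 1) ^ (1-d) = (n + c) ^ (1-d) := by
    rw [← Real.mul_rpow hn0.le (by positivity)]
    congr 1
    field_simp
    ring
  have e2 : (n:ℝ) ^ (1-d) * (c / n) ^ (1-d) = c ^ (1-d) := by
    rw [← Real.mul_rpow hn0.le (by positivity)]
    congr 1
    field_simp
  rw [intervalIntegral.integral_comp_add_right (fun x => x ^ (-d)),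
    integral_rpow (Or.inl (by linarith)), Faux,
    show -d + 1 = 1 - d from by ring, ← mul_div_assoc, mul_sub, e1, e2,
    zero_add, zero_add]

lemma hS_bound {d : ℝ} (hd : 1/2 < d) (hd1 : d < 1) (n j : ℕ) (hn : 1 ≤ n) :
    0 ≤ ∑ k ∈ Finset.Icc 1 n, ((k : ℝ) + (j : ℝ) + 1) ^ (-d) ∧
    (∑ k ∈ Finset.Icc 1 n, ((k : ℝ) + (j : ℝ) + 1) ^ (-d)) ≤
      (n:ℝ) ^ (1-d) * Faux d (((j:ℝ) + 1) / n) ∧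
    (n:ℝ) ^ (1-d) * Faux d (((j:ℝ) + 1) / n) - ((j:ℝ) + 1) ^ (-d) ≤
      ∑ k ∈ Finset.Icc 1 n, ((k : ℝ) + (j : ℝ) + 1) ^ (-d) := by
  have hd0 : (0:ℝ) < d := by linarith
  set c : ℝ := (j:ℝ) + 1 with hc
  have hc0 : 0 < c := by positivity
  set f : ℝ → ℝ := fun t => (t + c) ^ (-d) with hf
  have hanti : AntitoneOn f (Icc (0:ℝ) (0 + (n:ℝ))) := by
    intro x hx y hy hxy
    show (y + c) ^ (-d) ≤ (x + c) ^ (-d)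
    exact Real.rpow_le_rpow_of_nonpos (by linarith [hx.1]) (by linarith) (by linarith)
  have hSeq : (∑ k ∈ Finset.Icc 1 n, ((k : ℝ) + (j : ℝ) + 1) ^ (-d)) =
      ∑ i ∈ Finset.range n, f (0 + ((i + 1 : ℕ) : ℝ)) := by
    rw [← Finset.Ico_add_one_right_eq_Icc, Finset.sum_Ico_eq_sum_range]
    simp only [Nat.add_sub_cancel]
    refine Finset.sum_congr rfl fun i _ => ?_
    show (((1 + i : ℕ) : ℝ) + (j:ℝ) + 1) ^ (-d) = ((0:ℝ) + ((i + 1 : ℕ):ℝ) + c) ^ (-d)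
    push_cast
    congr 1
    ring
  have h2 := hanti.sum_le_integral
  have h1 := hanti.integral_le_sum
  have hIeq := hI_eq hd1 n hn hc0
  have hrs : (∑ i ∈ Finset.range n, f (0 + ((i:ℕ):ℝ))) + f (0 + ((n:ℕ):ℝ)) =
      f (0 + ((0:ℕ):ℝ)) + ∑ i ∈ Finset.range n, f (0 + ((i + 1 : ℕ) : ℝ)) := by
    have ha := Finset.sum_range_succ (fun i : ℕ => f (0 + ((i:ℕ):ℝ))) n
    have hb := Finset.sum_range_succ' (fun i : ℕ => f (0 + ((i:ℕ):ℝ))) n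
    rw [ha] at hb
    push_cast at hb ⊢
    linarith [hb]
  have hf0 : f (0 + ((0:ℕ):ℝ)) = c ^ (-d) := by
    show ((0:ℝ) + ((0:ℕ):ℝ) + c) ^ (-d) = c ^ (-d)
    norm_num
  have hfn : 0 ≤ f (0 + ((n:ℕ):ℝ)) := by
    show (0:ℝ) ≤ ((0:ℝ) + ((n:ℕ):ℝ) + c) ^ (-d)
    positivity
  have hS0 : 0 ≤ ∑ k ∈ Finset.Icc 1 n, ((k : ℝ) + (j : ℝ) + 1) ^ (-d) := by
    refine Finset.sum_nonneg fun k _ => ?_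
    positivity
  refine ⟨hS0, ?_, ?_⟩
  · rw [hSeq, ← hIeq]
    exact h2
  · rw [hSeq, ← hIeq]
    have : (∫ x in (0:ℝ)..(0 + (n:ℝ)), f x) ≤
        (∑ i ∈ Finset.range n, f (0 + ((i + 1 : ℕ) : ℝ))) + c ^ (-d) := by
      calc (∫ x in (0:ℝ)..(0 + (n:ℝ)), f x) ≤ ∑ i ∈ Finset.range n, f (0 + ((i:ℕ):ℝ)) := h1
        _ ≤ (∑ i ∈ Finset.range n, f (0 + ((i + 1 : ℕ) : ℝ))) + c ^ (-d) := by
            rw [← hf0]; linarith [hrs, hfn]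
    linarith
lemma hperterm {d : ℝ} (hd : 1/2 < d) (hd1 : d < 1) (n j : ℕ) (hn : 1 ≤ n) :
    (Faux d (((j:ℝ) + 1) / n)) ^ 2 / n - 2 * ((j:ℝ) + 1) ^ (-(2*d)) * (n:ℝ) ^ (2*d - 2)
      ≤ (∑ k ∈ Finset.Icc 1 n, ((k : ℝ) + (j : ℝ) + 1) ^ (-d)) ^ 2 / (n:ℝ) ^ (3 - 2*d) ∧
    (∑ k ∈ Finset.Icc 1 n, ((k : ℝ) + (j : ℝ) + 1) ^ (-d)) ^ 2 / (n:ℝ) ^ (3 - 2*d)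
      ≤ (Faux d (((j:ℝ) + 1) / n)) ^ 2 / n := by
  have hd0 : (0:ℝ) < d := by linarith
  have hn0 : (0:ℝ) < (n:ℝ) := by exact_mod_cast hn
  have hj0 : (0:ℝ) < (j:ℝ) + 1 := by positivity
  obtain ⟨h0, hub, hlb⟩ := hS_bound hd hd1 n j hn
  set S := ∑ k ∈ Finset.Icc 1 n, ((k : ℝ) + (j : ℝ) + 1) ^ (-d) with hS
  set φ := Faux d (((j:ℝ) + 1) / n) with hφ
  set ε := ((j:ℝ) + 1) ^ (-d) with hε
  have hε0 : 0 ≤ ε := Real.rpow_nonneg hj0.le _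
  have hφ0 : 0 ≤ φ := hF_nonneg hd1 _ (by positivity)
  have e1 : ((n:ℝ) ^ (1 - d)) ^ 2 = (n:ℝ) ^ (2 - 2*d) := by
    rw [← Real.rpow_natCast ((n:ℝ) ^ (1 - d)) 2, ← Real.rpow_mul hn0.le]
    norm_num
    congr 1
    ring
  have e2 : (n:ℝ) ^ (3 - 2*d) = (n:ℝ) ^ (2 - 2*d) * (n:ℝ) := by
    rw [show (3 - 2*d) = (2 - 2*d) + 1 by ring, Real.rpow_add hn0, Real.rpow_one]
  have e3 : (0:ℝ) < (n:ℝ) ^ (3 - 2*d) := Real.rpow_pos_of_pos hn0 _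
  have e3' : (0:ℝ) < (n:ℝ) ^ (2 - 2*d) := Real.rpow_pos_of_pos hn0 _
  have e3'' : (0:ℝ) < (n:ℝ) ^ (1 - d) := Real.rpow_pos_of_pos hn0 _
  have heq : ((n:ℝ) ^ (2 - 2*d) * φ^2) / (n:ℝ) ^ (3 - 2*d) = φ^2 / n := by
    rw [e2]
    field_simp
  constructor
  · -- lower bound
    have h4 : (n:ℝ) ^ (1 - d) * φ - S ≤ ε := by linarith
    have h5 : (0:ℝ) ≤ (n:ℝ) ^ (1 - d) * φ + S := by positivity
    have hq : ((n:ℝ) ^ (1 - d) * φ)^2 - 2 * ((n:ℝ) ^ (1 - d) * φ) * ε ≤ S^2 := by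
      nlinarith [mul_le_mul_of_nonneg_right h4 h5, mul_nonneg hε0 (sub_nonneg.2 hub)]
    have hq2 : (n:ℝ) ^ (2 - 2*d) * φ^2 - 2 * ((n:ℝ) ^ (1 - d) * φ) * ε ≤ S^2 := by
      rw [mul_pow, e1] at hq
      exact hq
    have hdiv : ((n:ℝ) ^ (2 - 2*d) * φ^2 - 2 * ((n:ℝ) ^ (1 - d) * φ) * ε) / (n:ℝ) ^ (3 - 2*d)
        ≤ S^2 / (n:ℝ) ^ (3 - 2*d) := by gcongr
    rw [sub_div, heq] at hdiv
    -- bound the cross term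
    have hφle : φ ≤ ε * (n:ℝ) ^ d := by
      have h := hF_le_rpow hd0 hd1 (u := ((j:ℝ) + 1) / n) (by positivity)
      have h2 : (((j:ℝ) + 1) / n) ^ (-d) = ε * (n:ℝ) ^ d := by
        rw [Real.div_rpow hj0.le hn0.le, Real.rpow_neg hn0.le d, div_inv_eq_mul, hε]
      rw [h2] at h
      exact h
    have e4 : (n:ℝ) ^ (1 - d) / (n:ℝ) ^ (3 - 2*d) = (n:ℝ) ^ (d - 2) := by
      rw [← Real.rpow_sub hn0]
      congr 1
      ring
    have e5 : ε * ε = ((j:ℝ) + 1) ^ (-(2*d)) := by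
      rw [hε, ← Real.rpow_add hj0]
      congr 1
      ring
    have e6 : (n:ℝ) ^ d * (n:ℝ) ^ (d - 2) = (n:ℝ) ^ (2*d - 2) := by
      rw [← Real.rpow_add hn0]
      congr 1
      ring
    have hcross : 2 * ((n:ℝ) ^ (1 - d) * φ) * ε / (n:ℝ) ^ (3 - 2*d)
        ≤ 2 * ((j:ℝ) + 1) ^ (-(2*d)) * (n:ℝ) ^ (2*d - 2) := by
      have hstep : 2 * ((n:ℝ) ^ (1 - d) * φ) * ε / (n:ℝ) ^ (3 - 2*d)
          = 2 * φ * ε * ((n:ℝ) ^ (1 - d) / (n:ℝ) ^ (3 - 2*d)) := by ring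
      rw [hstep, e4]
      have hn2 : (0:ℝ) < (n:ℝ) ^ (d - 2) := Real.rpow_pos_of_pos hn0 _
      calc 2 * φ * ε * (n:ℝ) ^ (d - 2) ≤ 2 * (ε * (n:ℝ) ^ d) * ε * (n:ℝ) ^ (d - 2) := by
            gcongr
        _ = 2 * (ε * ε) * ((n:ℝ) ^ d * (n:ℝ) ^ (d - 2)) := by ring
        _ = 2 * ((j:ℝ) + 1) ^ (-(2*d)) * (n:ℝ) ^ (2*d - 2) := by rw [e5, e6]
    linarith
  · -- upper bound
    have hS2 : S^2 ≤ (n:ℝ) ^ (2 - 2*d) * φ^2 := by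
      have := pow_le_pow_left₀ h0 hub 2
      rwa [mul_pow, e1] at this
    calc S^2 / (n:ℝ) ^ (3 - 2*d) ≤ ((n:ℝ) ^ (2 - 2*d) * φ^2) / (n:ℝ) ^ (3 - 2*d) := by gcongr
      _ = φ^2 / n := heq
theorem stmt_12 (d : ℝ) (hd : 1/2 < d) (hd1 : d < 1) :
    IntegrableOn
      (fun u : ℝ => (∫ s in (0:ℝ)..1, (s + u) ^ (-d)) ^ 2) (Ioi 0) volume ∧
    Tendsto
      (fun n : ℕ =>
        (∑' j : ℕ, (∑ k ∈ Finset.Icc 1 n, ((k : ℝ) + (j : ℝ) + 1) ^ (-d)) ^ 2) /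
          (n : ℝ) ^ (3 - 2 * d))
      atTop
      (nhds (∫ u in Ioi (0:ℝ), (∫ s in (0:ℝ)..1, (s + u) ^ (-d)) ^ 2)) := by
  have hd0 : (0:ℝ) < d := by linarith
  simp only [hF_eq hd1]
  refine ⟨hg_int hd hd1, ?_⟩
  set L := ∫ u in Ioi (0:ℝ), (Faux d u) ^ 2 with hL
  set C : ℝ := 1 / (1 - d) with hC
  -- summable base sequence
  have hsumK : Summable (fun j : ℕ => ((j:ℝ) + 1) ^ (-(2*d))) := by
    have base : Summable (fun n : ℕ => (n:ℝ) ^ (-(2*d))) :=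
      Real.summable_nat_rpow.2 (by linarith)
    have := (summable_nat_add_iff 1).2 base
    refine this.congr fun j => ?_
    push_cast
    norm_num
  set K : ℝ := ∑' j : ℕ, ((j:ℝ) + 1) ^ (-(2*d)) with hK
  have hmain : ∀ n : ℕ, 1 ≤ n →
      L - C^2 / n - 2 * K * (n:ℝ) ^ (2*d - 2) ≤
        (∑' j : ℕ, (∑ k ∈ Finset.Icc 1 n, ((k : ℝ) + (j : ℝ) + 1) ^ (-d)) ^ 2) /
          (n : ℝ) ^ (3 - 2 * d) ∧
      (∑' j : ℕ, (∑ k ∈ Finset.Icc 1 n, ((k : ℝ) + (j : ℝ) + 1) ^ (-d)) ^ 2) /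
          (n : ℝ) ^ (3 - 2 * d) ≤ L := by
    intro n hn
    have hn0 : (0:ℝ) < (n:ℝ) := by exact_mod_cast hn
    have hinv : (0:ℝ) < 1 / n := by positivity
    set A : ℕ → ℝ := fun j => (Faux d (((j:ℝ) + 1) / n)) ^ 2 / n with hA
    set B : ℕ → ℝ := fun j =>
      (∑ k ∈ Finset.Icc 1 n, ((k : ℝ) + (j : ℝ) + 1) ^ (-d)) ^ 2 / (n:ℝ) ^ (3 - 2*d) with hB
    set E : ℕ → ℝ := fun j => 2 * ((j:ℝ) + 1) ^ (-(2*d)) * (n:ℝ) ^ (2*d - 2) with hE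
    -- upper Riemann sum comparison
    have hHS := hHasSum_int hd hd1 (c := 0) (h := 1/n) le_rfl hinv
    have hAle : ∀ j : ℕ, A j ≤
        ∫ x in Ioc ((0:ℝ) + j * (1/n)) (0 + ((j:ℝ) + 1) * (1/n)), (Faux d x) ^ 2 := by
      intro j
      have hab : (0:ℝ) + j * (1/n) < 0 + ((j:ℝ) + 1) * (1/n) := by
        have : (0:ℝ) < 1/n := hinv
        nlinarith
      have hM : ∀ x ∈ Ioc ((0:ℝ) + j * (1/n)) (0 + ((j:ℝ) + 1) * (1/n)),
          (Faux d (((j:ℝ) + 1) / n)) ^ 2 ≤ (Faux d x) ^ 2 := by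
        intro x hx
        have hx0 : (0:ℝ) < x := lt_of_le_of_lt (by positivity) hx.1
        have hxle : x ≤ ((j:ℝ) + 1) / n := by
          have := hx.2
          rw [mul_one_div] at this
          linarith
        have h1 := hF_anti hd0 hd1 hx0 hxle
        exact pow_le_pow_left₀ (hF_nonneg hd1 _ (by positivity)) h1 2
      have h2 := hIoc_ge hd hd1 (by positivity) hab hM
      have h3 : ((0:ℝ) + ((j:ℝ) + 1) * (1/n) - (0 + j * (1/n))) *
          (Faux d (((j:ℝ) + 1) / n)) ^ 2 = A j := by
        rw [hA]
        field_simp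
        ring
      rwa [h3] at h2
    have hA0 : ∀ j : ℕ, 0 ≤ A j := fun j => by rw [hA]; positivity
    have hA_sum : Summable A := Summable.of_nonneg_of_le hA0 hAle hHS.summable
    have hA_le_L : (∑' j, A j) ≤ L :=
      le_of_le_of_eq (Summable.tsum_le_tsum hAle hA_sum hHS.summable) hHS.tsum_eq
    -- lower Riemann sum comparison
    have hHS2 := hHasSum_int hd hd1 (c := 1/n) (h := 1/n) hinv.le hinv
    have hAge : ∀ j : ℕ,
        (∫ x in Ioc ((1:ℝ)/n + j * (1/n)) (1/n + ((j:ℝ) + 1) * (1/n)), (Faux d x) ^ 2) ≤ A j := by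
      intro j
      have hab : (1:ℝ)/n + j * (1/n) < 1/n + ((j:ℝ) + 1) * (1/n) := by nlinarith
      have hM : ∀ x ∈ Ioc ((1:ℝ)/n + j * (1/n)) (1/n + ((j:ℝ) + 1) * (1/n)),
          (Faux d x) ^ 2 ≤ (Faux d (((j:ℝ) + 1) / n)) ^ 2 := by
        intro x hx
        have ha_eq : (1:ℝ)/n + j * (1/n) = ((j:ℝ) + 1) / n := by field_simp; ring
        have hu0 : (0:ℝ) < ((j:ℝ) + 1) / n := by positivity
        have hxgt : ((j:ℝ) + 1) / n ≤ x := by rw [← ha_eq]; exact hx.1.le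
        have h1 := hF_anti hd0 hd1 hu0 hxgt
        exact pow_le_pow_left₀ (hF_nonneg hd1 _ (le_trans hu0.le hxgt)) h1 2
      have h2 := hIoc_le hd hd1 (by positivity) hab hM
      have h3 : ((1:ℝ)/n + ((j:ℝ) + 1) * (1/n) - (1/n + j * (1/n))) *
          (Faux d (((j:ℝ) + 1) / n)) ^ 2 = A j := by
        rw [hA]
        field_simp
        ring
      rwa [h3] at h2
    have hIoi_le : (∫ x in Ioi ((1:ℝ)/n), (Faux d x) ^ 2) ≤ ∑' j, A j :=
      le_of_eq_of_le hHS2.tsum_eq.symm (Summable.tsum_le_tsum hAge hHS2.summable hA_sum)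
    -- small initial piece
    have hsplit : L = (∫ x in Ioc (0:ℝ) (1/n), (Faux d x) ^ 2) +
        ∫ x in Ioi ((1:ℝ)/n), (Faux d x) ^ 2 := by
      rw [hL, ← MeasureTheory.setIntegral_union (Ioc_disjoint_Ioi le_rfl) measurableSet_Ioi
        ((hg_int hd hd1).mono_set Ioc_subset_Ioi_self)
        ((hg_int hd hd1).mono_set (Ioi_subset_Ioi hinv.le)),
        Ioc_union_Ioi_eq_Ioi hinv.le]
    have hsmall : (∫ x in Ioc (0:ℝ) (1/n), (Faux d x) ^ 2) ≤ C^2 / n := by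
      have h2 := hIoc_le hd hd1 (le_refl (0:ℝ)) hinv (M := C^2) (fun x hx => by
        have h1 : 0 ≤ Faux d x := hF_nonneg hd1 x hx.1.le
        have h2 : Faux d x ≤ C := hF_le_C hd0 hd1 x hx.1.le
        exact pow_le_pow_left₀ h1 h2 2)
      have h3 : ((1:ℝ)/n - 0) * C^2 = C^2 / n := by ring
      rwa [h3] at h2
    have hAL_lower : L - C^2 / n ≤ ∑' j, A j := by
      rw [hsplit]
      linarith
    -- per-term comparison with B
    have hBbounds := fun j : ℕ => hperterm hd hd1 n j hn
    have hB0 : ∀ j : ℕ, 0 ≤ B j := fun j => by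
      rw [hB]
      positivity
    have hB_sum : Summable B :=
      Summable.of_nonneg_of_le hB0 (fun j => (hBbounds j).2) hA_sum
    have hE_sum : Summable E := by
      have := (hsumK.mul_left 2).mul_right ((n:ℝ) ^ (2*d - 2))
      exact this.congr fun j => by rw [hE]
    have hE_tsum : (∑' j, E j) = 2 * K * (n:ℝ) ^ (2*d - 2) := by
      rw [hE]
      have h1 : ∀ j : ℕ, 2 * ((j:ℝ) + 1) ^ (-(2*d)) * (n:ℝ) ^ (2*d - 2) =
          2 * (n:ℝ) ^ (2*d - 2) * (((j:ℝ) + 1) ^ (-(2*d))) := fun j => by ring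
      simp only [h1]
      rw [tsum_mul_left, hK]
      ring
    have hT_eq : (∑' j : ℕ, (∑ k ∈ Finset.Icc 1 n, ((k : ℝ) + (j : ℝ) + 1) ^ (-d)) ^ 2) /
        (n : ℝ) ^ (3 - 2 * d) = ∑' j, B j := by
      rw [hB, ← tsum_div_const]
    constructor
    · rw [hT_eq]
      have h5 : (∑' j, (A j - E j)) ≤ ∑' j, B j :=
        Summable.tsum_le_tsum (fun j => by
          have := (hBbounds j).1
          rw [hA, hB, hE]
          exact this) (hA_sum.sub hE_sum) hB_sum
      rw [Summable.tsum_sub hA_sum hE_sum, hE_tsum] at h5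
      linarith
    · rw [hT_eq]
      calc (∑' j, B j) ≤ ∑' j, A j :=
            Summable.tsum_le_tsum (fun j => (hBbounds j).2) hB_sum hA_sum
        _ ≤ L := hA_le_L
  -- final squeeze
  have t1 : Tendsto (fun n : ℕ => C^2 / (n:ℝ)) atTop (nhds 0) :=
    tendsto_const_div_atTop_nhds_zero_nat _
  have t2 : Tendsto (fun n : ℕ => (n:ℝ) ^ (2*d - 2)) atTop (nhds 0) := by
    have h := (tendsto_rpow_neg_atTop (y := 2 - 2*d) (by linarith)).comp
      (tendsto_natCast_atTop_atTop (R := ℝ))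
    have heq : (fun n : ℕ => (n:ℝ) ^ (2*d - 2)) =
        (fun x : ℝ => x ^ (-(2 - 2*d))) ∘ (fun n : ℕ => (n:ℝ)) := by
      funext n
      simp only [Function.comp_apply]
      congr 1
      ring
    rw [heq]
    exact h
  have tlo : Tendsto (fun n : ℕ => L - C^2 / n - 2 * K * (n:ℝ) ^ (2*d - 2)) atTop (nhds L) := by
    have := ((tendsto_const_nhds (x := L) (f := atTop (α := ℕ))).sub t1).sub (t2.const_mul (2*K))
    simpa using this
  refine tendsto_of_tendsto_of_tendsto_of_le_of_le' tlo tendsto_const_nhds ?_ ?_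
  · filter_upwards [eventually_ge_atTop 1] with n hn
    exact (hmain n hn).1
  · filter_upwards [eventually_ge_atTop 1] with n hn
    exact (hmain n hn).2
end
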